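/- arXiv:2503.21547 — 16 statements merged into one kernel-verified Lean document; each statement's English description precedes it below -/
import Mathlib

section
/- If an element a of a ring R is strongly weakly nil-clean (i.e., a = q + e or a = q - e for some nilpotent q and idempotent e with qe = eq), then -a is strongly weakly clean (i.e., -a can be written as u + f or u - f for a unit u and idempotent f with uf = fu). -/
/-- An element is strongly weakly nil-clean. -/
def IsSWNC {R : Type*} [Ring R] (a : R) : Prop :=
  ∃ q e : R, IsNilpotent q ∧ IsIdempotentElem e ∧ Commute q e ∧ (a = q + e ∨ a = q - e)

/-- A ring is GSWNC if every non-unit is strongly weakly nil-clean. -/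
def IsGSWNC (R : Type*) [Ring R] : Prop :=
  ∀ a : R, ¬ IsUnit a → IsSWNC a

theorem stmt0 {R : Type*} [Ring R] (a : R) (h : IsSWNC a) :
    ∃ u f : R, IsUnit u ∧ IsIdempotentElem f ∧ Commute u f ∧ (-a = u + f ∨ -a = u - f) := by
  obtain ⟨q, e, hq, he, hc, hcase⟩ := h
  rcases hcase with rfl | rfl
  · refine ⟨-q - 1, 1 - e, ?_, he.one_sub, ?_, Or.inl (by abel)⟩
    · have : IsUnit (q + 1) := hq.isUnit_add_one
      have h2 : -q - 1 = -(q + 1) := by abel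
      rw [h2]; exact this.neg
    · have h1 : Commute q (1 - e) := (Commute.one_right q).sub_right hc
      exact ((h1.neg_left).sub_left (Commute.one_left _))
  · refine ⟨2 • e - 1 - q, 1 - e, ?_, he.one_sub, ?_, Or.inl (by abel)⟩
    · have hu : IsUnit (2 • e - 1 : R) := by
        have pf : (2 • e - 1 : R) * (2 • e - 1) = 1 := by
          have h := he.eq
          rw [two_smul]
          noncomm_ring
          rw [h]; abel
        exact ⟨⟨2 • e - 1, 2 • e - 1, pf, pf⟩, rfl⟩
      have hcomm : Commute (-q) (2 • e - 1) := by
        have : Commute q (2 • e - 1) := ((hc.smul_right 2).sub_right (Commute.one_right q))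
        exact this.neg_left
      have := hq.neg.isUnit_add_left_of_commute hu hcomm
      simpa [sub_eq_add_neg, add_comm, add_assoc, add_left_comm] using this
    · have h1 : Commute (2 • e - 1 - q) (1 - e) := by
        have he2 : Commute e (1 - e) := (Commute.one_right e).sub_right (Commute.refl e)
        have hq2 : Commute q (1 - e) := (Commute.one_right q).sub_right hc
        exact (((he2.smul_left 2).sub_left (Commute.one_left _)).sub_left hq2)
      exact h1
end

section
/- If R is a GSWNC ring, then the Jacobson radical J(R) is a nil ideal. -/
/-- If `x` is in the Jacobson radical, then `y * x + 1` is a unit for all `y`. -/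
lemma jac_unit {R : Type*} [Ring R] {x : R} (hx : x ∈ Ideal.jacobson (⊥ : Ideal R)) (y : R) :
    IsUnit (y * x + 1) := by
  rw [Ideal.mem_jacobson_iff] at hx
  obtain ⟨z, hz⟩ := hx y
  rw [Ideal.mem_bot, sub_eq_zero] at hz
  have hz1 : z * (y * x + 1) = 1 := by rw [mul_add, mul_one, ← mul_assoc]; exact hz
  obtain ⟨w, hw⟩ := hx (-(z * y))
  rw [Ideal.mem_bot, sub_eq_zero] at hw
  have hzz : -(z * y) * x + 1 = z := by
    have : z * (y * x) + z = 1 := by rw [← mul_assoc]; exact hz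
    rw [neg_mul, mul_assoc, neg_add_eq_sub, sub_eq_iff_eq_add, ← this]
    abel
  have hwz : w * z = 1 := by
    rw [← hzz, mul_add, mul_one, ← mul_assoc]; exact hw
  have hweq : w = y * x + 1 := by
    calc w = w * (z * (y * x + 1)) := by rw [hz1, mul_one]
    _ = (w * z) * (y * x + 1) := by rw [mul_assoc]
    _ = y * x + 1 := by rw [hwz, one_mul]
  exact ⟨⟨y * x + 1, z, hweq ▸ hwz, hz1⟩, rfl⟩

theorem stmt2 {R : Type*} [Ring R] (h : IsGSWNC R) :
    ∀ x ∈ Ideal.jacobson (⊥ : Ideal R), IsNilpotent x := by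
  intro x hx
  by_cases hux : IsUnit x
  · -- then `0` is a unit, so the ring is trivial
    obtain ⟨u, hu⟩ := hux
    have h0 : IsUnit ((-↑u⁻¹ : R) * x + 1) := jac_unit hx _
    have : (-↑u⁻¹ : R) * x + 1 = 0 := by
      rw [← hu, neg_mul, u.inv_mul]; abel
    rw [this, isUnit_zero_iff] at h0
    exact ⟨1, by rw [pow_one, ← mul_one x, ← h0, mul_zero]⟩
  obtain ⟨q, e, ⟨n, hn⟩, he, hc, hcase | hcase⟩ := h x hux
  · -- x = q + e ; show e * (x - 1) is nilpotent, x - 1 is a unit, so e = 0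
    have hex : Commute e x := by rw [hcase]; exact (hc.symm).add_right (Commute.refl e)
    have hq' : q = x - e := by rw [hcase]; abel
    have heq : e * q = e * (x - 1) := by
      rw [hq', mul_sub, mul_sub, mul_one, he.eq]
    have hnil : IsNilpotent (e * (x - 1)) := by
      refine ⟨n, ?_⟩
      rw [← heq, (hc.symm).mul_pow, hn, mul_zero]
    obtain ⟨m, hm⟩ := hnil
    have hcm : Commute e (x - 1) := hex.sub_right (Commute.one_right e)
    rw [hcm.mul_pow] at hm
    rcases m with _ | m
    · -- trivial ring
      simp only [pow_zero, mul_one] at hm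
      exact ⟨1, by rw [pow_one, ← mul_one x, hm, mul_zero]⟩
    · have hu1 : IsUnit (x - 1) := by
        have := jac_unit hx (-1)
        rw [neg_one_mul, neg_add_eq_sub] at this
        exact (IsUnit.neg_iff _).mp (by rwa [neg_sub])
      have hup : IsUnit ((x - 1) ^ (m + 1)) := hu1.pow _
      rw [he.pow_succ_eq] at hm
      have he0 : e = 0 := (hup.mul_left_eq_zero).mp hm
      rw [hcase, he0, add_zero]
      exact ⟨n, hn⟩
  · -- x = q - e ; show e * (x + 1) is nilpotent, x + 1 is a unit, so e = 0
    have hex : Commute e x := by rw [hcase]; exact (hc.symm).sub_right (Commute.refl e)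
    have hq' : q = x + e := by rw [hcase]; abel
    have heq : e * q = e * (x + 1) := by
      rw [hq', mul_add, mul_add, mul_one, he.eq]
    have hnil : IsNilpotent (e * (x + 1)) := by
      refine ⟨n, ?_⟩
      rw [← heq, (hc.symm).mul_pow, hn, mul_zero]
    obtain ⟨m, hm⟩ := hnil
    have hcm : Commute e (x + 1) := hex.add_right (Commute.one_right e)
    rw [hcm.mul_pow] at hm
    rcases m with _ | m
    · simp only [pow_zero, mul_one] at hm
      exact ⟨1, by rw [pow_one, ← mul_one x, hm, mul_zero]⟩
    · have hu1 : IsUnit (x + 1) := by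
        have := jac_unit hx 1
        rwa [one_mul] at this
      have hup : IsUnit ((x + 1) ^ (m + 1)) := hu1.pow _
      rw [he.pow_succ_eq] at hm
      have he0 : e = 0 := (hup.mul_left_eq_zero).mp hm
      rw [hcase, he0, sub_zero]
      exact ⟨n, hn⟩
end

section
/- A ring R is GSWNC if and only if for every non-unit a in R, either a + a² is nilpotent or a - a² is nilpotent. -/
/-- Lifting idempotents in commutative rings: if `a - a^2` is nilpotent then there is an
idempotent `e` with `a - e` nilpotent. -/
lemma comm_key {S : Type*} [CommRing S] : ∀ (n : ℕ) (a : S), (a - a ^ 2) ^ n = 0 →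
    ∃ e : S, IsIdempotentElem e ∧ IsNilpotent (a - e) := by
  intro n
  induction n using Nat.strong_induction_on with
  | _ n ih =>
    intro a h
    match n, h with
    | 0, h =>
      simp only [pow_zero] at h
      exact ⟨0, by simp [IsIdempotentElem], 1, by rw [pow_one, sub_zero, ← mul_one a, h, mul_zero]⟩
    | 1, h =>
      simp only [pow_one, sub_eq_zero] at h
      refine ⟨a, ?_, by simp⟩
      unfold IsIdempotentElem
      rw [← pow_two, ← h]
    | (m+2), h =>
      set b : S := 3 * a ^ 2 - 2 * a ^ 3 with hb
      have hfac : b - b ^ 2 = (a - a ^ 2) ^ 2 * ((3 - 2 * a) * (1 + 2 * a)) := by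
        rw [hb]; ring
      have hbn : (b - b ^ 2) ^ (m + 1) = 0 := by
        rw [hfac, mul_pow, ← pow_mul]
        have : (a - a ^ 2) ^ (2 * (m + 1)) = 0 := by
          have : (m + 2) ≤ 2 * (m + 1) := by omega
          calc (a - a^2) ^ (2*(m+1)) = (a - a^2)^(m+2) * (a - a^2)^(2*(m+1)-(m+2)) := by
                rw [← pow_add]; congr 1; omega
            _ = 0 := by rw [h, zero_mul]
        rw [this, zero_mul]
      obtain ⟨e, he, hq⟩ := ih (m + 1) (by omega) b hbn
      refine ⟨e, he, ?_⟩
      have h1 : IsNilpotent (a - b) := by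
        have : a - b = (a - a ^ 2) * (1 - 2 * a) := by rw [hb]; ring
        rw [this]
        exact (Commute.all _ _).isNilpotent_mul_right ⟨m + 2, h⟩
      have := (Commute.all (a - b) (b - e)).isNilpotent_add h1 hq
      simpa using this

/-- If `a - a^2` is nilpotent in a ring, then `a` is a sum of commuting nilpotent and
idempotent. -/
lemma swnc_of_nilpotent {R : Type*} [Ring R] (a : R) (h : IsNilpotent (a - a ^ 2)) :
    ∃ q e : R, IsNilpotent q ∧ IsIdempotentElem e ∧ Commute q e ∧ a = q + e := by
  letI S := Subring.closure ({a} : Set R)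
  letI : CommRing S := Subring.closureCommRingOfComm (by
    rintro x hx y hy
    rw [Set.mem_singleton_iff] at hx hy
    rw [hx, hy])
  set aS : S := ⟨a, Subring.subset_closure (Set.mem_singleton a)⟩ with haS
  obtain ⟨n, hn⟩ := h
  have hc : ((aS - aS ^ 2 : S) : R) = a - a ^ 2 := by push_cast [haS]; rfl
  have hn' : (aS - aS ^ 2) ^ n = 0 := by
    apply Subtype.ext
    push_cast
    exact hn
  obtain ⟨e, he, hq⟩ := comm_key n aS hn'
  refine ⟨a - (e : R), (e : R), ?_, ?_, ?_, (sub_add_cancel a e).symm⟩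
  · have := hq.map (Subring.subtype S)
    simpa [haS] using this
  · exact congrArg Subtype.val he
  · have hcm : (aS - e) * e = e * (aS - e) := mul_comm _ _
    have := congrArg (Subring.subtype S) hcm
    simpa [Commute, SemiconjBy, haS] using this

theorem stmt3 {R : Type*} [Ring R] :
    IsGSWNC R ↔ ∀ a : R, ¬ IsUnit a → (IsNilpotent (a + a ^ 2) ∨ IsNilpotent (a - a ^ 2)) := by
  constructor
  · intro hG a ha
    obtain ⟨q, e, hq, he, hc, hcase⟩ := hG a ha
    have h1 : e * e = e := he
    have h2 : q * e = e * q := hc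
    have hc2 : Commute q (2 * e) := (Commute.ofNat_right q 2).mul_right hc
    rcases hcase with rfl | rfl
    · right
      have key : (q + e) - (q + e) ^ 2 = q * (1 - q - 2 * e) := by
        simp only [pow_two, mul_add, add_mul, mul_sub, sub_mul, mul_one, one_mul, h1, ← h2,
          two_mul]
        abel
      rw [key]
      exact (((Commute.one_right q).sub_right (Commute.refl q)).sub_right hc2).isNilpotent_mul_right hq
    · left
      have key : (q - e) + (q - e) ^ 2 = q * (1 + q - 2 * e) := by
        simp only [pow_two, mul_add, add_mul, mul_sub, sub_mul, mul_one, one_mul, h1, ← h2,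
          two_mul]
        abel
      rw [key]
      exact (((Commute.one_right q).add_right (Commute.refl q)).sub_right hc2).isNilpotent_mul_right hq
  · intro h a ha
    rcases h a ha with hn | hn
    · have hn' : IsNilpotent ((-a) - (-a) ^ 2) := by
        have : (-a) - (-a) ^ 2 = -(a + a ^ 2) := by rw [neg_sq]; abel
        rw [this]
        exact hn.neg
      obtain ⟨q, e, hq, he, hcm, heq⟩ := swnc_of_nilpotent (-a) hn'
      refine ⟨-q, e, hq.neg, he, hcm.neg_left, Or.inr ?_⟩
      have : a = -(q + e) := by rw [← heq, neg_neg]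
      rw [this]
      abel
    · obtain ⟨q, e, hq, he, hcm, heq⟩ := swnc_of_nilpotent a hn
      exact ⟨q, e, hq, he, hcm, Or.inl heq⟩
end

section
/- Every GSWNC ring is strongly π-regular: for every a in R there exists n ∈ ℕ such that aⁿ ∈ aⁿ⁺¹R. -/
lemma swnc_aux {R : Type*} [Ring R] (q e : R) (n : ℕ) (hqn : q ^ n = 0)
    (he : IsIdempotentElem e) (hc : Commute q e) :
    ∃ m : ℕ, ∃ r : R, (q + e) ^ m = (q + e) ^ (m + 1) * r := by
  set a := q + e with ha
  have key : ∀ k : ℕ, a ^ k * (1 - e) = q ^ k * (1 - e) := by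
    intro k
    induction k with
    | zero => simp
    | succ k ih =>
      have h1 : e * (q ^ k * (1 - e)) = 0 := by
        have : e * q ^ k = q ^ k * e := (hc.symm.pow_right k)
        rw [← mul_assoc, this, mul_assoc, mul_sub, mul_one, he.eq, sub_self, mul_zero]
      calc a ^ (k + 1) * (1 - e) = a * (a ^ k * (1 - e)) := by
            rw [pow_succ', mul_assoc]
        _ = a * (q ^ k * (1 - e)) := by rw [ih]
        _ = q * (q ^ k * (1 - e)) + e * (q ^ k * (1 - e)) := by
            rw [ha, add_mul]
        _ = q ^ (k + 1) * (1 - e) := by rw [h1, add_zero, ← mul_assoc, ← pow_succ']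
  have hane : a ^ n = a ^ n * e := by
    have := key n
    rw [hqn, zero_mul, mul_sub, mul_one, sub_eq_zero] at this
    exact this
  obtain ⟨u, hu⟩ := (IsNilpotent.isUnit_add_one ⟨n, hqn⟩ : IsUnit (q + 1))
  have hea : e * a = e * u := by
    rw [ha, hu, mul_add, mul_add, mul_one, he.eq]
  refine ⟨n, ↑u⁻¹, ?_⟩
  calc a ^ n = a ^ n * e := hane
    _ = a ^ n * (e * ↑u * ↑u⁻¹) := by
        rw [mul_assoc e, Units.mul_inv, mul_one]
    _ = a ^ n * (e * a * ↑u⁻¹) := by rw [hea]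
    _ = a ^ n * e * a * ↑u⁻¹ := by rw [← mul_assoc, ← mul_assoc]
    _ = a ^ (n + 1) * ↑u⁻¹ := by rw [← hane, ← pow_succ]

lemma neg_flip {R : Type*} [Ring R] (b r : R) (m : ℕ)
    (h : (-b) ^ m = (-b) ^ (m + 1) * r) : b ^ m = b ^ (m + 1) * -r := by
  rcases Nat.even_or_odd m with hm | hm
  · rw [hm.neg_pow, hm.add_one.neg_pow] at h
    rw [h, neg_mul, mul_neg]
  · rw [hm.neg_pow, hm.add_one.neg_pow] at h
    rw [mul_neg, ← h, neg_neg]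

theorem stmt4 {R : Type*} [Ring R] (h : IsGSWNC R) :
    ∀ a : R, ∃ n : ℕ, ∃ r : R, a ^ n = a ^ (n + 1) * r := by
  intro a
  by_cases ha : IsUnit a
  · obtain ⟨u, rfl⟩ := ha
    exact ⟨0, ↑u⁻¹, by rw [pow_zero, zero_add, pow_one, Units.mul_inv]⟩
  · obtain ⟨q, e, ⟨n, hqn⟩, he, hc, hcase⟩ := h a ha
    rcases hcase with rfl | rfl
    · exact swnc_aux q e n hqn he hc
    · obtain ⟨m, r, hm⟩ := swnc_aux (-q) e n (by rw [neg_pow, hqn, mul_zero]) he hc.neg_left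
      have hneg : -q + e = -(q - e) := by rw [neg_sub, sub_eq_neg_add]
      rw [hneg] at hm
      exact ⟨m, -r, neg_flip _ r m hm⟩
end

section
/- Let I be a nil ideal of a ring R. Then R is GSWNC if and only if R/I is GSWNC. -/
/-- In a commutative ring, if `a - a²` is nilpotent then there is an idempotent `e`
with `a - e` nilpotent. -/
lemma swnc_comm_key {A : Type*} [CommRing A] (a : A) (h : IsNilpotent (a - a ^ 2)) :
    ∃ e : A, IsIdempotentElem e ∧ IsNilpotent (a - e) := by
  obtain ⟨n, hn⟩ := h
  have hcop : IsCoprime (a ^ (n + 1)) ((1 - a) ^ (n + 1)) :=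
    IsCoprime.pow (⟨1, 1, by ring⟩ : IsCoprime a (1 - a))
  obtain ⟨u, v, huv⟩ := hcop
  have h2 : a ^ (n + 1) * (1 - a) ^ (n + 1) = 0 := by
    have hformal : a * (1 - a) = a - a ^ 2 := by ring
    rw [← mul_pow, hformal, pow_succ, hn, zero_mul]
  refine ⟨u * a ^ (n + 1), ?_, ?_⟩
  · show u * a ^ (n + 1) * (u * a ^ (n + 1)) = u * a ^ (n + 1)
    linear_combination (u * a ^ (n + 1)) * huv - u * v * h2
  · have hae : a - u * a ^ (n + 1) = (v * (1 - a) ^ n - u * a ^ n) * (a - a ^ 2) := by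
      linear_combination (-a) * huv
    rw [hae]
    exact (Commute.all _ _).isNilpotent_mul_left ⟨n, hn⟩

/-- In any ring, if `a - a²` is nilpotent then `a` is strongly nil-clean,
with witnesses commuting with each other. -/
lemma swnc_key {R : Type*} [Ring R] {a : R} (h : IsNilpotent (a - a ^ 2)) :
    ∃ q e : R, IsNilpotent q ∧ IsIdempotentElem e ∧ Commute q e ∧ a = q + e := by
  have hcomm : ∀ x ∈ ({a} : Set R), ∀ y ∈ ({a} : Set R), x * y = y * x := by
    rintro x hx y hy
    simp only [Set.mem_singleton_iff] at hx hy
    rw [hx, hy]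
  letI : CommRing (Subring.closure ({a} : Set R)) := Subring.closureCommRingOfComm hcomm
  have haS : a ∈ Subring.closure ({a} : Set R) := Subring.subset_closure rfl
  set a' : Subring.closure ({a} : Set R) := ⟨a, haS⟩ with ha'
  have h' : IsNilpotent (a' - a' ^ 2) := by
    obtain ⟨n, hn⟩ := h
    refine ⟨n, Subtype.ext ?_⟩
    push_cast
    exact hn
  obtain ⟨e', he'idem, he'nil⟩ := swnc_comm_key a' h'
  refine ⟨a - (e' : R), (e' : R), ?_, ?_, ?_, by abel⟩
  · obtain ⟨n, hn⟩ := he'nil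
    refine ⟨n, ?_⟩
    have := congrArg (Subtype.val) hn
    push_cast at this
    exact this
  · have := congrArg (Subtype.val) he'idem
    push_cast at this
    exact this
  · show (a - (e' : R)) * (e' : R) = (e' : R) * (a - (e' : R))
    have := congrArg (Subtype.val) (mul_comm (a' - e') e')
    push_cast at this
    exact this

/-- If `q` is nilpotent, `e` idempotent, and they commute, then `(q+e) - (q+e)²`
is nilpotent. -/
lemma swnc_aux_nil {Q : Type*} [Ring Q] {q e : Q} (hq : IsNilpotent q)
    (he : IsIdempotentElem e) (hc : Commute q e) :
    IsNilpotent ((q + e) - (q + e) ^ 2) := by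
  have h1 : e * e = e := he
  have h2 : e * q = q * e := hc.symm
  have key : (q + e) - (q + e) ^ 2 = q * (1 - q - (e + e)) := by
    calc (q + e) - (q + e) ^ 2
        = q + e - (q * q + q * e + (e * q + e * e)) := by noncomm_ring
      _ = q + e - (q * q + q * e + (q * e + e)) := by rw [h1, h2]
      _ = q * (1 - q - (e + e)) := by noncomm_ring
  rw [key]
  exact (((Commute.one_right q).sub_right (Commute.refl q)).sub_right
    (hc.add_right hc)).isNilpotent_mul_right hq

theorem stmt5 {R : Type*} [Ring R] (I : TwoSidedIdeal R) (hI : ∀ x ∈ I, IsNilpotent x) :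
    IsGSWNC R ↔ IsGSWNC I.ringCon.Quotient := by
  set c := I.ringCon with hc
  -- membership in I from vanishing in the quotient
  have hker : ∀ x : R, (x : c.Quotient) = 0 → x ∈ I := by
    intro x hx
    rw [I.mem_iff]
    exact c.eq.mp (by rw [c.coe_zero]; exact hx)
  -- nilpotency lifts
  have hnil_lift : ∀ x : R, IsNilpotent (x : c.Quotient) → IsNilpotent x := by
    intro x hx
    obtain ⟨n, hn⟩ := hx
    have hxn : x ^ n ∈ I := hker _ (by rw [c.coe_pow]; exact hn)
    obtain ⟨m, hm⟩ := hI _ hxn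
    exact ⟨n * m, by rw [pow_mul]; exact hm⟩
  -- units lift
  have hunit_lift : ∀ a : R, IsUnit (a : c.Quotient) → IsUnit a := by
    intro a h
    obtain ⟨w, hw⟩ := h
    obtain ⟨b, hb0⟩ := Quot.exists_rep ((w⁻¹ : c.Quotientˣ) : c.Quotient)
    have hb : ((b : R) : c.Quotient) = ((w⁻¹ : c.Quotientˣ) : c.Quotient) := hb0
    have hab : IsUnit (a * b) := by
      have h1 : ((a * b - 1 : R) : c.Quotient) = 0 := by
        rw [c.coe_sub, c.coe_mul, c.coe_one, ← hw, hb, Units.mul_inv, sub_self]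
      have h2 : IsNilpotent (a * b - 1) := hI _ (hker _ h1)
      have h3 : IsUnit (1 - -(a * b - 1)) := h2.neg.isUnit_one_sub
      simpa using h3
    have hba : IsUnit (b * a) := by
      have h1 : ((b * a - 1 : R) : c.Quotient) = 0 := by
        rw [c.coe_sub, c.coe_mul, c.coe_one, hb, ← hw, Units.inv_mul, sub_self]
      have h2 : IsNilpotent (b * a - 1) := hI _ (hker _ h1)
      have h3 : IsUnit (1 - -(b * a - 1)) := h2.neg.isUnit_one_sub
      simpa using h3
    obtain ⟨cc, hcc1, hcc2⟩ := isUnit_iff_exists.mp hab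
    obtain ⟨d, hd1, hd2⟩ := isUnit_iff_exists.mp hba
    have har : a * (b * cc) = 1 := by rw [← mul_assoc]; exact hcc1
    have hla : (d * b) * a = 1 := by rw [mul_assoc]; exact hd2
    have heq : b * cc = d * b := by
      calc b * cc = (d * b * a) * (b * cc) := by rw [hla, one_mul]
        _ = (d * b) * (a * (b * cc)) := by noncomm_ring
        _ = d * b := by rw [har, mul_one]
    exact ⟨⟨a, b * cc, har, by rw [heq]; exact hla⟩, rfl⟩
  constructor
  · -- R GSWNC → quotient GSWNC
    intro hR x hx
    obtain ⟨a, ha0⟩ := Quot.exists_rep x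
    have ha : ((a : R) : c.Quotient) = x := ha0
    subst ha
    have hanu : ¬ IsUnit a := fun h => hx (h.map c.mk')
    obtain ⟨q, e, hq, he, hcm, hcase⟩ := hR a hanu
    have hmk : ∀ y : R, c.mk' y = (y : c.Quotient) := fun _ => rfl
    refine ⟨(q : c.Quotient), (e : c.Quotient), ?_, ?_, ?_, ?_⟩
    · have := hq.map c.mk'
      rwa [hmk] at this
    · show ((e : c.Quotient)) * e = e
      rw [← c.coe_mul, he]
    · show ((q : c.Quotient)) * e = (e : c.Quotient) * q
      rw [← c.coe_mul, ← c.coe_mul, hcm.eq]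
    · rcases hcase with h | h
      · left; rw [h, c.coe_add]
      · right; rw [h, c.coe_sub]
  · -- quotient GSWNC → R GSWNC
    intro hQ a ha
    have hQa : ¬ IsUnit (a : c.Quotient) := fun h => ha (hunit_lift a h)
    obtain ⟨q, e, hq, he, hcm, hcase⟩ := hQ (a : c.Quotient) hQa
    rcases hcase with h | h
    · -- a ≡ q + e : then a - a² is nilpotent in R
      have hnq : IsNilpotent ((a - a ^ 2 : R) : c.Quotient) := by
        have hco : ((a - a ^ 2 : R) : c.Quotient) = (q + e) - (q + e) ^ 2 := by
          rw [c.coe_sub, c.coe_pow, h]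
        rw [hco]
        exact swnc_aux_nil hq he hcm
      have hnil : IsNilpotent (a - a ^ 2) := hnil_lift _ hnq
      obtain ⟨q', e', hq', he', hcm', heq⟩ := swnc_key hnil
      exact ⟨q', e', hq', he', hcm', Or.inl heq⟩
    · -- a ≡ q - e : then (-a) - (-a)² is nilpotent in R
      have hnq : IsNilpotent ((-a - (-a) ^ 2 : R) : c.Quotient) := by
        have hco : ((-a - (-a) ^ 2 : R) : c.Quotient) = ((-q) + e) - ((-q) + e) ^ 2 := by
          rw [c.coe_sub, c.coe_pow, c.coe_neg, h]
          noncomm_ring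
        rw [hco]
        exact swnc_aux_nil hq.neg he hcm.neg_left
      have hnil : IsNilpotent (-a - (-a) ^ 2) := hnil_lift _ hnq
      obtain ⟨q', e', hq', he', hcm', heq⟩ := swnc_key hnil
      refine ⟨-q', e', hq'.neg, he', hcm'.neg_left, Or.inr ?_⟩
      have : a = -(q' + e') := by rw [← heq, neg_neg]
      rw [this]; noncomm_ring
end

section
/- If R is a GSWNC ring and e is a nonzero idempotent of R, then the corner ring eRe is GSWNC. -/
/-- The corner ring eRe, as a non-unital subring of R. -/
def cornerRing {R : Type*} [Ring R] (e : R) (he : IsIdempotentElem e) : NonUnitalSubring R where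
  carrier := {x : R | e * x * e = x}
  add_mem' := by
    intro x y hx hy
    simp only [Set.mem_setOf_eq] at *
    rw [mul_add, add_mul, hx, hy]
  zero_mem' := by simp
  neg_mem' := by
    intro x hx
    simp only [Set.mem_setOf_eq] at *
    rw [mul_neg, neg_mul, hx]
  mul_mem' := by
    intro x y hx hy
    simp only [Set.mem_setOf_eq] at *
    have h1 : e * x = x := by
      rw [← hx, ← mul_assoc, ← mul_assoc, he.eq]
    have h2 : y * e = y := by
      rw [← hy, mul_assoc (e * y) e e, he.eq]
    calc e * (x * y) * e = (e * x) * (y * e) := by noncomm_ring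
      _ = x * y := by rw [h1, h2]


lemma key_swnc {R : Type*} [Ring R] (x : R) (m : ℕ) (hx : (x - x ^ 2) ^ (m + 1) = 0) :
    ∃ f : R, IsIdempotentElem f ∧ Commute x f ∧ IsNilpotent (x - f) ∧
      (∀ e : R, e * x = x → e * f = f) ∧ (∀ e : R, x * e = x → f * e = f) := by
  set n := m + 1 with hn
  set f := 1 - (1 - x ^ n) ^ n with hf
  have hfid : IsIdempotentElem f := isIdempotentElem_one_sub_one_sub_pow_pow x n hx
  have hcxn : Commute x (x ^ n) := (Commute.refl x).pow_right n
  have hc1xn : Commute x (1 - x ^ n) := (Commute.one_right x).sub_right hcxn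
  have hcxf : Commute x f := (Commute.one_right x).sub_right (hc1xn.pow_right n)
  set s : R := ∑ i ∈ Finset.range n, x ^ i with hs
  set t : R := ∑ i ∈ Finset.range n, (1 - x ^ n) ^ i with ht
  have hs1 : (1 - x) * s = 1 - x ^ n := by
    have h := mul_geom_sum x n
    have : (1 - x) * s = -((x - 1) * s) := by noncomm_ring
    rw [this, h, neg_sub]
  have hs2 : s * (1 - x) = 1 - x ^ n := by
    have h := geom_sum_mul x n
    have : s * (1 - x) = -(s * (x - 1)) := by noncomm_ring
    rw [this, h, neg_sub]
  have ht1 : x ^ n * t = f := by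
    have h := mul_geom_sum (1 - x ^ n) n
    have : x ^ n * t = -(((1 - x ^ n) - 1) * t) := by noncomm_ring
    rw [this, h, neg_sub, ← hf]
  have ht2 : t * x ^ n = f := by
    have h := geom_sum_mul (1 - x ^ n) n
    have : t * x ^ n = -(t * ((1 - x ^ n) - 1)) := by noncomm_ring
    rw [this, h, neg_sub, ← hf]
  have hcs : Commute (1 - x) s := hs1.trans hs2.symm
  have key0 : x ^ n * (1 - x) ^ n = 0 := by
    have hcx1 : Commute x (1 - x) := (Commute.one_right x).sub_right (Commute.refl x)
    have h1 : x * (1 - x) = x - x ^ 2 := by noncomm_ring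
    calc x ^ n * (1 - x) ^ n = (x * (1 - x)) ^ n := (hcx1.mul_pow n).symm
      _ = (x - x ^ 2) ^ n := by rw [h1]
      _ = 0 := hx
  have hcx1f : Commute x (1 - f) := (Commute.one_right x).sub_right hcxf
  have hcf1x : Commute f (1 - x) := (Commute.one_right f).sub_right hcxf.symm
  have nilp1 : (x * (1 - f)) ^ n = 0 := by
    have h1 : (x * (1 - f)) ^ n = x ^ n * (1 - f) ^ n := hcx1f.mul_pow n
    have h2 : (1 - f) ^ n = 1 - f := hfid.one_sub.pow_succ_eq m
    have h3 : (1 : R) - f = (1 - x) ^ n * s ^ n := by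
      rw [hf, sub_sub_cancel, ← hs1, hcs.mul_pow]
    rw [h1, h2, h3, ← mul_assoc, key0, zero_mul]
  have nilp2 : (f * (1 - x)) ^ n = 0 := by
    have h1 : (f * (1 - x)) ^ n = f ^ n * (1 - x) ^ n := hcf1x.mul_pow n
    have h2 : f ^ n = f := hfid.pow_succ_eq m
    rw [h1, h2, ← ht2, mul_assoc, key0, mul_zero]
  have hsub : x - f = x * (1 - f) - f * (1 - x) := by
    calc x - f = x - x * f - f + x * f := by abel
      _ = x - x * f - f + f * x := by rw [hcxf.eq]
      _ = x * (1 - f) - f * (1 - x) := by noncomm_ring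
  have hcomm : Commute (x * (1 - f)) (f * (1 - x)) := by
    have c1 : Commute x (f * (1 - x)) :=
      hcxf.mul_right ((Commute.one_right x).sub_right (Commute.refl x))
    have c2 : Commute (1 - f) (f * (1 - x)) :=
      ((Commute.one_left f).sub_left (Commute.refl f)).mul_right
        ((Commute.one_right (1 - f)).sub_right ((Commute.one_left x).sub_left hcxf.symm))
    exact c1.mul_left c2
  refine ⟨f, hfid, hcxf, ?_, ?_, ?_⟩
  · rw [hsub]
    exact hcomm.isNilpotent_sub ⟨n, nilp1⟩ ⟨n, nilp2⟩
  · intro e hex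
    have hexn : e * x ^ n = x ^ n := by
      rw [hn, pow_succ', ← mul_assoc, hex]
    rw [← ht1, ← mul_assoc, hexn]
  · intro e hxe
    have hxne : x ^ n * e = x ^ n := by
      rw [hn, pow_succ, mul_assoc, hxe]
    rw [← ht2, mul_assoc, hxne]

theorem stmt7 {R : Type*} [Ring R] (hR : IsGSWNC R) (e : R) (he : IsIdempotentElem e)
    (hne : e ≠ 0) :
    ∀ a : cornerRing e he,
      ¬ (∃ b : cornerRing e he, (a : R) * b = e ∧ (b : R) * a = e) →
      ∃ q f : cornerRing e he, IsNilpotent (q : R) ∧ (f * f = f) ∧ (q * f = f * q) ∧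
        (a = q + f ∨ a = q - f) := by
  intro a hninv
  have hmem : e * (a : R) * e = (a : R) := a.2
  have hea : e * (a : R) = (a : R) := by
    conv_lhs => rw [← hmem]
    calc e * (e * (a : R) * e) = (e * e) * (a : R) * e := by noncomm_ring
      _ = e * (a : R) * e := by rw [he.eq]
      _ = (a : R) := hmem
  have hae : (a : R) * e = (a : R) := by
    conv_lhs => rw [← hmem]
    calc (e * (a : R) * e) * e = e * (a : R) * (e * e) := by noncomm_ring
      _ = e * (a : R) * e := by rw [he.eq]
      _ = (a : R) := hmem
  -- a is not a unit in R
  have hnotunit : ¬ IsUnit ((a : R)) := by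
    rintro ⟨u, hu⟩
    have h1 : (↑u⁻¹ : R) * (a : R) = 1 := by rw [← hu]; exact u.inv_mul
    have h2 : (a : R) * (↑u⁻¹ : R) = 1 := by rw [← hu]; exact u.mul_inv
    have he1 : e = 1 := by
      calc e = 1 * e := (one_mul e).symm
        _ = (↑u⁻¹ : R) * (a : R) * e := by rw [h1]
        _ = (↑u⁻¹ : R) * ((a : R) * e) := by rw [mul_assoc]
        _ = (↑u⁻¹ : R) * (a : R) := by rw [hae]
        _ = 1 := h1
    refine hninv ⟨⟨(↑u⁻¹ : R), ?_⟩, ?_, ?_⟩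
    · show e * (↑u⁻¹ : R) * e = (↑u⁻¹ : R)
      rw [he1, one_mul, mul_one]
    · show (a : R) * (↑u⁻¹ : R) = e
      rw [h2, he1]
    · show (↑u⁻¹ : R) * (a : R) = e
      rw [h1, he1]
  obtain ⟨q, g, hq, hg, hcqg, hcase⟩ := hR (a : R) hnotunit
  have hcq2 : Commute q (q * q) := (Commute.refl q).mul_right (Commute.refl q)
  have nqq : IsNilpotent (q * q) := (Commute.refl q).isNilpotent_mul_left hq
  have nqg : IsNilpotent (q * g) := hcqg.isNilpotent_mul_right hq
  have hc2 : Commute (q * q) (q * g + q * g) :=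
    ((((Commute.refl q).mul_left (Commute.refl q)).mul_right
        (hcqg.mul_left hcqg)).add_right
      (((Commute.refl q).mul_left (Commute.refl q)).mul_right (hcqg.mul_left hcqg)))
  have hcq_qg : Commute q (q * g + q * g) :=
    ((Commute.refl q).mul_right hcqg).add_right ((Commute.refl q).mul_right hcqg)
  have n2 : IsNilpotent (q * g + q * g) := (Commute.refl (q * g)).isNilpotent_add nqg nqg
  rcases hcase with ha | ha
  · -- a = q + g; then a - a² is nilpotent
    have hexp : (a : R) - (a : R) ^ 2 = (q - q * q - (q * g + q * g)) + (g - g * g) := by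
      rw [ha]
      calc q + g - (q + g) ^ 2 = q - q * q - (q * g + g * q) + (g - g * g) := by noncomm_ring
        _ = q - q * q - (q * g + q * g) + (g - g * g) := by rw [hcqg.eq]
    have hnil : IsNilpotent ((a : R) - (a : R) ^ 2) := by
      rw [hexp, hg.eq, sub_self, add_zero]
      exact (hcq_qg.sub_left hc2).isNilpotent_sub (hcq2.isNilpotent_sub hq nqq) n2
    obtain ⟨mm, hmpow⟩ := hnil
    have hx : ((a : R) - (a : R) ^ 2) ^ (mm + 1) = 0 := by rw [pow_succ, hmpow, zero_mul]
    obtain ⟨f, hfid, hcf, hnf, hef, hfe⟩ := key_swnc ((a : R)) mm hx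
    have hfmem : e * f * e = f := by rw [hef e hea, hfe e hae]
    set F : cornerRing e he := ⟨f, hfmem⟩ with hF
    refine ⟨a - F, F, ?_, ?_, ?_, Or.inl ?_⟩
    · show IsNilpotent ((a : R) - f)
      exact hnf
    · exact Subtype.ext hfid
    · apply Subtype.ext
      show ((a : R) - f) * f = f * ((a : R) - f)
      rw [sub_mul, mul_sub, hcf.eq]
    · apply Subtype.ext
      show (a : R) = ((a : R) - f) + f
      abel
  · -- a = q - g; then -a - (-a)² is nilpotent
    have hexp : (-(a : R)) - (-(a : R)) ^ 2 =
        -((q + q * q - (q * g + q * g)) + (g * g - g)) := by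
      rw [ha]
      calc -(q - g) - (-(q - g)) ^ 2 = -(q + q * q - (q * g + g * q) + (g * g - g)) := by
            noncomm_ring
        _ = -(q + q * q - (q * g + q * g) + (g * g - g)) := by rw [hcqg.eq]
    have hnil : IsNilpotent ((-(a : R)) - (-(a : R)) ^ 2) := by
      rw [hexp, hg.eq, sub_self, add_zero]
      exact ((hcq_qg.add_left hc2).isNilpotent_sub (hcq2.isNilpotent_add hq nqq) n2).neg
    obtain ⟨mm, hmpow⟩ := hnil
    have hx : ((-(a : R)) - (-(a : R)) ^ 2) ^ (mm + 1) = 0 := by rw [pow_succ, hmpow, zero_mul]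
    obtain ⟨f, hfid, hcf, hnf, hef, hfe⟩ := key_swnc (-(a : R)) mm hx
    have hfmem : e * f * e = f := by
      rw [hef e (by rw [mul_neg, hea]), hfe e (by rw [neg_mul, hae])]
    set F : cornerRing e he := ⟨f, hfmem⟩ with hF
    have hca : Commute ((a : R)) f := Commute.neg_left_iff.mp hcf
    refine ⟨a + F, F, ?_, ?_, ?_, Or.inr ?_⟩
    · show IsNilpotent ((a : R) + f)
      have h : (a : R) + f = -((-(a : R)) - f) := by abel
      rw [h]; exact hnf.neg
    · exact Subtype.ext hfid
    · apply Subtype.ext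
      show ((a : R) + f) * f = f * ((a : R) + f)
      rw [add_mul, mul_add, hca.eq]
    · apply Subtype.ext
      show (a : R) = ((a : R) + f) - f
      abel
end

section
/- For any nonzero ring R and any integer n ≥ 3, the matrix ring Mₙ(R) is not GSWNC. -/
/-- If `a` is SWNC then `a² - a` or `a² + a` is nilpotent. -/
lemma isSWNC_nilpotent {S : Type*} [Ring S] {a : S} (h : IsSWNC a) :
    IsNilpotent (a * a - a) ∨ IsNilpotent (a * a + a) := by
  obtain ⟨q, e, hq, he, hc, h' | h'⟩ := h
  · left
    have heq : a * a - a = q * (q + e + e - 1) := by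
      subst h'
      have h1 : e * q = q * e := hc.eq.symm
      have h2 : e * e = e := he
      have h3 : (q + e) * (q + e) = q * q + q * e + e * q + e * e := by noncomm_ring
      rw [h3, h1, h2]
      noncomm_ring
    have hcomm : Commute q (q + e + e - 1) :=
      (((Commute.refl q).add_right hc).add_right hc).sub_right (Commute.one_right q)
    rw [heq]
    exact hcomm.isNilpotent_mul_right hq
  · right
    have heq : a * a + a = q * (q - e - e + 1) := by
      subst h'
      have h1 : e * q = q * e := hc.eq.symm
      have h2 : e * e = e := he
      have h3 : (q - e) * (q - e) = q * q - q * e - e * q + e * e := by noncomm_ring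
      rw [h3, h1, h2]
      noncomm_ring
    have hcomm : Commute q (q - e - e + 1) :=
      (((Commute.refl q).sub_right hc).sub_right hc).add_right (Commute.one_right q)
    rw [heq]
    exact hcomm.isNilpotent_mul_right hq

/-- A nilpotent idempotent is zero. -/
lemma idem_nilpotent_eq_zero {S : Type*} [Ring S] {e : S} (he : IsIdempotentElem e)
    (hn : IsNilpotent e) : e = 0 := by
  obtain ⟨k, hk⟩ := hn
  cases k with
  | zero =>
      have h1 : (1 : S) = 0 := by simpa using hk
      calc e = e * 1 := (mul_one e).symm
        _ = e * 0 := by rw [h1]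
        _ = 0 := mul_zero e
  | succ m => rw [← he.pow_succ_eq m, hk]

set_option maxHeartbeats 1000000 in
theorem stmt8 {R : Type*} [Ring R] [Nontrivial R] (n : ℕ) (hn : 3 ≤ n) :
    ¬ IsGSWNC (Matrix (Fin n) (Fin n) R) := by
  intro hg
  set i0 : Fin n := ⟨0, by omega⟩ with hi0
  set i1 : Fin n := ⟨1, by omega⟩ with hi1
  set i2 : Fin n := ⟨2, by omega⟩ with hi2
  have h01 : i0 ≠ i1 := by simp [hi0, hi1, Fin.ext_iff]
  have h02 : i0 ≠ i2 := by simp [hi0, hi2, Fin.ext_iff]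
  have h12 : i1 ≠ i2 := by simp [hi1, hi2, Fin.ext_iff]
  set s11 : Matrix (Fin n) (Fin n) R := Matrix.single i1 i1 1 with hs11
  set s12 : Matrix (Fin n) (Fin n) R := Matrix.single i1 i2 1 with hs12
  set s21 : Matrix (Fin n) (Fin n) R := Matrix.single i2 i1 1 with hs21
  set s22 : Matrix (Fin n) (Fin n) R := Matrix.single i2 i2 1 with hs22
  -- A is the companion matrix of x² + x - 1 in rows/columns 1,2
  set A : Matrix (Fin n) (Fin n) R := s12 + s21 - s22 with hA
  set E : Matrix (Fin n) (Fin n) R := s11 + s22 with hE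
  set D : Matrix (Fin n) (Fin n) R :=
    -(s11 + s11 + s11 + s12 + s12 + s21 + s21 + s22) with hD
  -- basic product table
  have m1212 : s12 * s12 = 0 := Matrix.single_mul_single_of_ne _ _ _ _ h12.symm 1
  have m1221 : s12 * s21 = s11 := by
    rw [hs12, hs21, Matrix.single_mul_single_same, mul_one]
  have m1222 : s12 * s22 = s12 := by
    rw [hs12, hs22, Matrix.single_mul_single_same, mul_one]
  have m2112 : s21 * s12 = s22 := by
    rw [hs21, hs12, Matrix.single_mul_single_same, mul_one]
  have m2121 : s21 * s21 = 0 := Matrix.single_mul_single_of_ne _ _ _ _ h12 1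
  have m2122 : s21 * s22 = 0 := Matrix.single_mul_single_of_ne _ _ _ _ h12 1
  have m2212 : s22 * s12 = 0 := Matrix.single_mul_single_of_ne _ _ _ _ h12.symm 1
  have m2221 : s22 * s21 = s21 := by
    rw [hs22, hs21, Matrix.single_mul_single_same, mul_one]
  have m2222 : s22 * s22 = s22 := by
    rw [hs22, Matrix.single_mul_single_same, mul_one]
  have m1111 : s11 * s11 = s11 := by
    rw [hs11, Matrix.single_mul_single_same, mul_one]
  have m1112 : s11 * s12 = s12 := by
    rw [hs11, hs12, Matrix.single_mul_single_same, mul_one]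
  have m1121 : s11 * s21 = 0 := Matrix.single_mul_single_of_ne _ _ _ _ h12 1
  have m1122 : s11 * s22 = 0 := Matrix.single_mul_single_of_ne _ _ _ _ h12 1
  have m1211 : s12 * s11 = 0 := Matrix.single_mul_single_of_ne _ _ _ _ h12.symm 1
  have m2111 : s21 * s11 = s21 := by
    rw [hs21, hs11, Matrix.single_mul_single_same, mul_one]
  have m2211 : s22 * s11 = 0 := Matrix.single_mul_single_of_ne _ _ _ _ h12.symm 1
  -- A² + A = E
  have hAAE : A * A + A = E := by
    rw [hA, hE]
    simp only [sub_mul, mul_sub, add_mul, mul_add,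
      m1212, m1221, m1222, m2112, m2121, m2122, m2212, m2221, m2222]
    abel
  -- (A² - A) * D = E and D * (A² - A) = E
  have hB : A * A - A =
      s11 - s12 - s12 - s21 - s21 + s22 + s22 + s22 := by
    rw [hA]
    simp only [sub_mul, mul_sub, add_mul, mul_add,
      m1212, m1221, m1222, m2112, m2121, m2122, m2212, m2221, m2222]
    abel
  have hBD : (A * A - A) * D = E := by
    rw [hB, hD, hE]
    simp only [mul_neg, sub_mul, mul_sub, add_mul, mul_add, neg_add, neg_neg, neg_sub,
      m1111, m1112, m1121, m1122, m1211, m1212, m1221, m1222,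
      m2111, m2112, m2121, m2122, m2211, m2212, m2221, m2222]
    abel
  have hDB : D * (A * A - A) = E := by
    rw [hB, hD, hE]
    simp only [neg_mul, sub_mul, mul_sub, add_mul, mul_add, neg_add, neg_neg, neg_sub,
      m1111, m1112, m1121, m1122, m1211, m1212, m1221, m1222,
      m2111, m2112, m2121, m2122, m2211, m2212, m2221, m2222]
    abel
  -- E is a nonzero idempotent
  have hEE : IsIdempotentElem E := by
    show E * E = E
    rw [hE]
    simp only [add_mul, mul_add, m1111, m1122, m2211, m2222]
    abel
  have hE0 : E ≠ 0 := by
    intro h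
    have : E i1 i1 = 0 := by rw [h]; rfl
    rw [hE, hs11, hs22] at this
    simp [Matrix.single, Matrix.add_apply, h12.symm] at this
  -- A is not a unit: its column i0 is zero
  have hAcol : ∀ j, A j i0 = 0 := by
    intro j
    rw [hA, hs12, hs21, hs22]
    simp [Matrix.single, Matrix.sub_apply, Matrix.add_apply, h01.symm, h02.symm]
  have hu : ¬ IsUnit A := by
    intro h
    obtain ⟨u, huA⟩ := h
    have hinv : (u⁻¹ : (Matrix (Fin n) (Fin n) R)ˣ).val * A = 1 := by
      rw [← huA]; exact u.inv_mul
    have h1 : ((u⁻¹ : (Matrix (Fin n) (Fin n) R)ˣ).val * A) i0 i0 = (1 : R) := by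
      rw [hinv]; exact Matrix.one_apply_eq i0
    rw [Matrix.mul_apply] at h1
    simp only [hAcol, mul_zero, Finset.sum_const_zero] at h1
    exact zero_ne_one h1
  -- derive the contradiction
  have hswnc := isSWNC_nilpotent (hg A hu)
  have hEnil : IsNilpotent E := by
    rcases hswnc with h | h
    · rw [← hBD]
      have hc : Commute (A * A - A) D := hBD.trans hDB.symm
      exact hc.isNilpotent_mul_right h
    · rw [← hAAE]; exact h
  exact hE0 (idem_nilpotent_eq_zero hEE hEnil)
end

section
/- Every GSWNC ring is Dedekind-finite: if ab = 1 then ba = 1. -/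
lemma swnc_left_inv_unit {R : Type*} [Ring R] {x y : R} (hyx : y * x = 1)
    (hs : IsSWNC x) : IsUnit x := by
  obtain ⟨q, e, ⟨n, hq⟩, he, hc, hx⟩ := hs
  have hcx : Commute q x := by
    rcases hx with h | h <;> subst h
    · exact (Commute.refl q).add_right hc
    · exact (Commute.refl q).sub_right hc
  have hx1e : x * (1 - e) = q * (1 - e) := by
    rcases hx with h | h <;> subst h <;>
      simp [mul_sub, add_mul, sub_mul, he.eq]
  have key : ∀ m : ℕ, x ^ m * (1 - e) = q ^ m * (1 - e) := by
    intro m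
    induction m with
    | zero => simp
    | succ k ih =>
      calc x ^ (k + 1) * (1 - e) = x ^ k * (x * (1 - e)) := by
            rw [pow_succ, mul_assoc]
        _ = x ^ k * (q * (1 - e)) := by rw [hx1e]
        _ = q * (x ^ k * (1 - e)) := by
            rw [← mul_assoc, ← mul_assoc, (hcx.symm.pow_left k).eq]
        _ = q * (q ^ k * (1 - e)) := by rw [ih]
        _ = q ^ (k + 1) * (1 - e) := by rw [pow_succ, ← mul_assoc, (Commute.refl q).pow_left k |>.eq]
  have hzero : x ^ n * (1 - e) = 0 := by rw [key n, hq, zero_mul]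
  have hyxn : y ^ n * x ^ n = 1 := pow_mul_pow_eq_one n hyx
  have he1 : e = 1 := by
    have : (1 : R) - e = 0 := by
      calc (1 : R) - e = y ^ n * x ^ n * (1 - e) := by rw [hyxn, one_mul]
        _ = y ^ n * (x ^ n * (1 - e)) := by rw [mul_assoc]
        _ = 0 := by rw [hzero, mul_zero]
    exact ((sub_eq_zero.mp this).symm)
  subst he1
  rcases hx with h | h <;> subst h
  · simpa [add_comm] using IsNilpotent.isUnit_one_add (⟨n, hq⟩ : IsNilpotent q)
  · have : IsUnit (1 - q) := IsNilpotent.isUnit_one_sub ⟨n, hq⟩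
    simpa using this.neg

theorem stmt9 {R : Type*} [Ring R] (h : IsGSWNC R) :
    ∀ a b : R, a * b = 1 → b * a = 1 := by
  intro a b hab
  by_cases hb : IsUnit b
  · obtain ⟨u, rfl⟩ := hb
    have ha : a = ↑u⁻¹ := by
      have := congrArg (· * (↑u⁻¹ : R)) hab
      simpa [mul_assoc] using this
    simp [ha]
  · exact absurd (swnc_left_inv_unit hab (h b hb)) hb
end

section
/- If the 2×2 matrix ring M₂(R) over a ring R is GSWNC, then R is strongly weakly nil-clean. -/
theorem stmt10 {R : Type*} [Ring R] (h : IsGSWNC (Matrix (Fin 2) (Fin 2) R)) :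
    ∀ a : R, IsSWNC a := by
  intro a
  by_cases htriv : (1 : R) = 0
  · have ha : a = 0 := by rw [← mul_one a, htriv, mul_zero]
    exact ⟨0, 0, ⟨1, by simp⟩, by simp [IsIdempotentElem], Commute.refl 0,
      Or.inl (by simp [ha])⟩
  set A : Matrix (Fin 2) (Fin 2) R := !![a, 1; 0, 0] with hAdef
  have hnotunit : ¬ IsUnit A := by
    intro hu
    obtain ⟨B, hB⟩ := hu.exists_right_inv
    have h11 := congrFun (congrFun hB 1) 1
    simp [hAdef, Matrix.mul_apply, Fin.sum_univ_two, Matrix.one_apply] at h11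
    exact htriv h11.symm
  obtain ⟨Q, E, hQnil, hEid, hQE, hsum⟩ := h A hnotunit
  have hQcomm : Commute Q A := by
    rcases hsum with h1 | h1 <;> rw [h1]
    · exact (Commute.refl Q).add_right hQE
    · exact (Commute.refl Q).sub_right hQE
  have hEcomm : Commute E A := by
    rcases hsum with h1 | h1 <;> rw [h1]
    · exact hQE.symm.add_right (Commute.refl E)
    · exact hQE.symm.sub_right (Commute.refl E)
  have key : ∀ X : Matrix (Fin 2) (Fin 2) R, Commute X A → X 1 0 = 0 := by
    intro X hX
    have h11 := congrFun (congrFun hX.eq 1) 1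
    simpa [hAdef, Matrix.mul_apply, Fin.sum_univ_two] using h11
  have hQ0 := key Q hQcomm
  have hE0 := key E hEcomm
  have hpow : ∀ n, (Q ^ n) 1 0 = 0 ∧ (Q ^ n) 0 0 = (Q 0 0) ^ n := by
    intro n
    induction n with
    | zero => simp [Matrix.one_apply]
    | succ n ih =>
      constructor
      · rw [pow_succ]
        simp [Matrix.mul_apply, Fin.sum_univ_two, ih.1, hQ0]
      · rw [pow_succ, pow_succ]
        simp [Matrix.mul_apply, Fin.sum_univ_two, ih.1, ih.2, hQ0]
  refine ⟨Q 0 0, E 0 0, ?_, ?_, ?_, ?_⟩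
  · obtain ⟨n, hn⟩ := hQnil
    exact ⟨n, by rw [← (hpow n).2, hn]; simp⟩
  · have h00 := congrFun (congrFun hEid 0) 0
    simpa [Matrix.mul_apply, Fin.sum_univ_two, hE0, IsIdempotentElem] using h00
  · have h00 := congrFun (congrFun hQE.eq 0) 0
    simpa [Matrix.mul_apply, Fin.sum_univ_two, hE0, hQ0, Commute, SemiconjBy] using h00
  · rcases hsum with h1 | h1
    · left
      have h00 := congrFun (congrFun h1 0) 0
      simpa [hAdef] using h00
    · right
      have h00 := congrFun (congrFun h1 0) 0
      simpa [hAdef] using h00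
end

section
/- Let R be a ring whose only idempotents are 0 and 1. Then R is GSWNC if and only if R is local with nil Jacobson radical. -/
theorem stmt12 {R : Type*} [Ring R] [Nontrivial R]
    (h : ∀ e : R, IsIdempotentElem e → e = 0 ∨ e = 1) :
    IsGSWNC R ↔ (IsLocalRing R ∧ ∀ x ∈ Ideal.jacobson (⊥ : Ideal R), IsNilpotent x) := by
  constructor
  · intro hg
    have hnil : ∀ a : R, ¬ IsUnit a → IsNilpotent a := by
      intro a ha
      obtain ⟨q, e, hq, he, hc, hae⟩ := hg a ha
      rcases h e he with rfl | rfl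
      · rcases hae with rfl | rfl
        · simpa using hq
        · simpa using hq
      · exfalso
        rcases hae with rfl | rfl
        · exact ha hq.isUnit_add_one
        · exact ha hq.isUnit_sub_one
    have hloc : IsLocalRing R := by
      constructor
      intro a b hab
      by_cases ha : IsUnit a
      · exact Or.inl ha
      · right
        have : b = 1 - a := by rw [← hab, add_sub_cancel_left]
        rw [this]
        exact (hnil a ha).isUnit_one_sub
    refine ⟨hloc, fun x hx => ?_⟩
    apply hnil
    intro hxu
    obtain ⟨M, hM⟩ := Ideal.exists_maximal R
    have hxM : x ∈ M := by
      have : Ideal.jacobson (⊥ : Ideal R) ≤ M := sInf_le ⟨bot_le, hM⟩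
      exact this hx
    exact hM.ne_top (M.eq_top_of_isUnit_mem hxM hxu)
  · rintro ⟨hloc, hjac⟩ a ha
    have haj : a ∈ Ideal.jacobson (⊥ : Ideal R) := by
      rw [Ideal.jacobson, Ideal.mem_sInf]
      rintro M ⟨-, hM⟩
      by_contra haM
      have hlt : M < M ⊔ Ideal.span {a} := by
        refine lt_of_le_of_ne le_sup_left fun hEq => haM ?_
        rw [hEq]
        exact Submodule.mem_sup_right (Ideal.subset_span rfl)
      have htop : M ⊔ Ideal.span {a} = ⊤ := hM.out.2 _ hlt
      have h1 : (1 : R) ∈ M ⊔ Ideal.span {a} := htop ▸ Submodule.mem_top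
      obtain ⟨m, hm, s, hs, hms⟩ := Submodule.mem_sup.mp h1
      obtain ⟨r, rfl⟩ := Ideal.mem_span_singleton'.mp hs
      rcases IsLocalRing.isUnit_or_isUnit_of_add_one hms with hum | hura
      · exact hM.ne_top (M.eq_top_of_isUnit_mem hm hum)
      · -- r * a is a unit, so a has a left inverse t
        obtain ⟨u, hu⟩ := hura
        set t : R := (↑u⁻¹ : R) * r with ht
        have hta : t * a = 1 := by
          rw [ht, mul_assoc, ← hu, Units.inv_mul]
        have hidem : IsIdempotentElem (a * t) := by
          unfold IsIdempotentElem
          show a * t * (a * t) = a * t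
          rw [mul_assoc a t (a * t), ← mul_assoc t a t, hta, one_mul]
        rcases h _ hidem with h0 | h1'
        · have : a = 0 := by
            calc a = a * t * a := by rw [mul_assoc, hta, mul_one]
              _ = 0 := by rw [h0, zero_mul]
          rw [this] at hta
          simp at hta
        · exact ha ⟨⟨a, t, h1', hta⟩, rfl⟩
    refine ⟨a, 0, hjac a haj, IsIdempotentElem.zero, Commute.zero_right a, Or.inl (by rw [add_zero])⟩
end

section
/- If R is a GSWNC ring and 2 is not a unit of R, then either 2 is nilpotent or 6 is nilpotent in R. -/
theorem stmt13 {R : Type*} [Ring R] (h : IsGSWNC R) (h2 : ¬ IsUnit (2 : R)) :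
    IsNilpotent (2 : R) ∨ IsNilpotent (6 : R) := by
  obtain ⟨q, e, hq, he, hc, hcase | hcase⟩ := h 2 h2
  · left
    have he' : e = 2 - q := by rw [hcase]; abel
    have hid : (2 - q) * (2 - q) = 2 - q := by rw [← he']; exact he
    have e2 : (2 - q) * (2 - q) - (2 - q) = -(q * (3 - q) - 2) := by noncomm_ring
    have key : (2 : R) = q * (3 - q) := by
      have h0 : (2 - q) * (2 - q) - (2 - q) = 0 := by rw [hid, sub_self]
      rw [e2, neg_eq_zero, sub_eq_zero] at h0
      exact h0.symm
    rw [key]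
    exact Commute.isNilpotent_mul_right ((Commute.ofNat_right q 3).sub_right (Commute.refl q)) hq
  · right
    have he' : e = q - 2 := by rw [hcase]; abel
    have hid : (q - 2) * (q - 2) = q - 2 := by rw [← he']; exact he
    have h6 : (6 : R) = 3 • (2 : R) := by rw [nsmul_eq_mul]; norm_num
    have e2 : (q - 2) * (q - 2) - (q - 2) = -(q * (5 - q) - 6) := by rw [h6]; noncomm_ring
    have key : (6 : R) = q * (5 - q) := by
      have h0 : (q - 2) * (q - 2) - (q - 2) = 0 := by rw [hid, sub_self]
      rw [e2, neg_eq_zero, sub_eq_zero] at h0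
      exact h0.symm
    rw [key]
    exact Commute.isNilpotent_mul_right ((Commute.ofNat_right q 5).sub_right (Commute.refl q)) hq
end

section
/- A ring R is strongly nil-clean if and only if R is GSWNC and R is a UU-ring (every unit is unipotent, i.e., U(R) ⊆ 1 + Nil(R)). -/
theorem stmt14 {R : Type*} [Ring R] :
    (∀ a : R, ∃ q e : R, IsNilpotent q ∧ IsIdempotentElem e ∧ Commute q e ∧ a = q + e) ↔
      (IsGSWNC R ∧ ∀ u : Rˣ, IsNilpotent ((u : R) - 1)) := by
  constructor
  · intro h
    refine ⟨fun a _ => ?_, fun u => ?_⟩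
    · obtain ⟨q, e, hq, he, hc, hae⟩ := h a
      exact ⟨q, e, hq, he, hc, Or.inl hae⟩
    · obtain ⟨q, e, hq, he, hc, hu⟩ := h (u : R)
      -- q commutes with u
      have hqu : Commute q (u : R) := by
        rw [hu]; exact (Commute.refl q).add_right hc
      have hqiu : Commute (↑u⁻¹ : R) q := (hqu.symm).units_inv_left
      have hnil : IsNilpotent ((↑u⁻¹ : R) * q) := hqiu.isNilpotent_mul_left hq
      have hunit : IsUnit (1 - (↑u⁻¹ : R) * q) := hnil.isUnit_one_sub
      have heq : e = (u : R) * (1 - (↑u⁻¹ : R) * q) := by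
        rw [mul_sub, mul_one, ← mul_assoc, Units.mul_inv, one_mul]
        rw [hu]; noncomm_ring
      have heu : IsUnit e := heq ▸ u.isUnit.mul hunit
      have he1 : e = 1 := by
        obtain ⟨v, hv⟩ := heu
        have h2 : (↑v⁻¹ : R) * (e * e) = (↑v⁻¹ : R) * e := by rw [he]
        rw [← hv, ← mul_assoc, Units.inv_mul, one_mul] at h2
        rw [← hv, h2]
      have : (u : R) - 1 = q := by rw [hu, he1]; noncomm_ring
      rwa [this]
  · rintro ⟨hg, hu⟩ a
    have h2 : IsNilpotent (2 : R) := by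
      have := hu (-1)
      have h : ((-1 : Rˣ) : R) - 1 = -2 := by norm_num
      rw [h] at this
      simpa using this.neg
    by_cases ha : IsUnit a
    · obtain ⟨v, rfl⟩ := ha
      exact ⟨(v : R) - 1, 1, hu v, IsIdempotentElem.one, Commute.one_right _, by noncomm_ring⟩
    · obtain ⟨q, e, hq, he, hc, h⟩ := hg a ha
      rcases h with h | h
      · exact ⟨q, e, hq, he, hc, h⟩
      · refine ⟨q - 2 * e, e, ?_, he, ?_, by rw [h]; noncomm_ring⟩
        · have c2 : ∀ x : R, Commute (2 : R) x := fun x => by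
            simpa [one_add_one_eq_two] using (Commute.one_left x).add_left (Commute.one_left x)
          have h2e : IsNilpotent (2 * e) := (c2 e).isNilpotent_mul_right h2
          have hcom : Commute q (2 * e) := ((c2 q).symm).mul_right hc
          exact hcom.isNilpotent_sub hq h2e
        · have c2 : ∀ x : R, Commute (2 : R) x := fun x => by
            simpa [one_add_one_eq_two] using (Commute.one_left x).add_left (Commute.one_left x)
          exact (hc.sub_left ((c2 e).mul_left (Commute.refl e))).symm.symm
end

section
/- Let R be a GSWNC ring in which 2 is a unit and every unit u satisfies u² = 1. Then R is commutative. -/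
theorem stmt16 {R : Type*} [Ring R] (h : IsGSWNC R) (h2 : IsUnit (2 : R))
    (hu : ∀ u : Rˣ, (u : R) ^ 2 = 1) :
    ∀ a b : R, a * b = b * a := by
  have husq : ∀ w : R, IsUnit w → w ^ 2 = 1 := by
    rintro w ⟨u, rfl⟩; exact hu u
  -- all nilpotents are zero
  have hnil0 : ∀ q : R, IsNilpotent q → q = 0 := by
    intro q hq
    have h1q : IsUnit (1 + q) := hq.isUnit_one_add
    have hsq : (1 + q) ^ 2 = 1 := husq _ h1q
    have key : q * (2 + q) = (1 + q) ^ 2 - 1 := by rw [pow_two]; noncomm_ring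
    rw [hsq, sub_self] at key
    have h2q : IsUnit (2 + q) :=
      hq.isUnit_add_left_of_commute h2 (Commute.ofNat_right q 2)
    obtain ⟨v, hv⟩ := h2q
    have : q * (v : R) * (v⁻¹ : Rˣ) = 0 := by rw [hv, key, zero_mul]
    simpa [mul_assoc] using this
  -- idempotents are central
  have hidem : ∀ e : R, IsIdempotentElem e → ∀ a : R, e * a = a * e := by
    intro e he a
    have he1 : (1 - e) * e = 0 := by rw [sub_mul, one_mul, he.eq, sub_self]
    have he2 : e * (1 - e) = 0 := by rw [mul_sub, mul_one, he.eq, sub_self]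
    have hx : (e * a * (1 - e)) ^ 2 = 0 := by
      calc (e * a * (1 - e)) ^ 2 = e * a * ((1 - e) * e) * (a * (1 - e)) := by
            rw [pow_two]; noncomm_ring
        _ = 0 := by rw [he1]; simp
    have hx0 : e * a * (1 - e) = 0 := hnil0 _ ⟨2, hx⟩
    have hy : ((1 - e) * a * e) ^ 2 = 0 := by
      calc ((1 - e) * a * e) ^ 2 = (1 - e) * a * (e * (1 - e)) * (a * e) := by
            rw [pow_two]; noncomm_ring
        _ = 0 := by rw [he2]; simp
    have hy0 : (1 - e) * a * e = 0 := hnil0 _ ⟨2, hy⟩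
    rw [mul_sub, mul_one] at hx0
    rw [sub_mul, one_mul, sub_mul] at hy0
    rw [sub_eq_zero.mp hx0, sub_eq_zero.mp hy0]
  -- non-units are central
  have hnonunit : ∀ a : R, ¬ IsUnit a → ∀ b : R, a * b = b * a := by
    intro a ha b
    obtain ⟨q, e, hq, he, _, hcase⟩ := h a ha
    have hq0 : q = 0 := hnil0 q hq
    rcases hcase with rfl | rfl
    · rw [hq0]; simpa using hidem e he b
    · rw [hq0]
      have := hidem e he b
      simp only [zero_sub, neg_mul, mul_neg, this]
  intro a b
  by_cases ha : IsUnit a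
  · by_cases hb : IsUnit b
    · obtain ⟨u, rfl⟩ := ha
      obtain ⟨v, rfl⟩ := hb
      have hu2 : (u : R) ^ 2 = 1 := hu u
      have hv2 : (v : R) ^ 2 = 1 := hu v
      symm
      calc (v : R) * u = (u : R) ^ 2 * ((v : R) * u) * (v : R) ^ 2 := by
            rw [hu2, hv2]; rw [one_mul, mul_one]
        _ = (u : R) * (((u * v : Rˣ) : R) ^ 2) * v := by
            push_cast; rw [pow_two, pow_two, pow_two]; noncomm_ring
        _ = (u : R) * v := by rw [hu (u * v)]; rw [mul_one]
    · exact (hnonunit b hb a).symm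
  · exact hnonunit a ha b
end

section
/- Let f: R → S be a surjective ring homomorphism such that the only idempotent of R lying in Ker(f) is 0. Then R is GSWNC if and only if S is GSWNC and Ker(f) is a nil ideal. -/
lemma idem_nilp_zero {R : Type*} [Ring R] {e : R} (he : IsIdempotentElem e)
    (h : IsNilpotent e) : e = 0 := by
  obtain ⟨n, hn⟩ := h
  calc e = e ^ (n + 1) := (he.pow_succ_eq n).symm
    _ = e ^ n * e := pow_succ e n
    _ = 0 := by rw [hn, zero_mul]

lemma key_lift {R : Type*} [Ring R] (a : R) (h : IsNilpotent (a - a ^ 2)) :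
    ∃ e : R, IsIdempotentElem e ∧ Commute a e ∧ IsNilpotent (a - e) := by
  obtain ⟨n, hn⟩ := h
  rcases Nat.eq_zero_or_pos n with rfl | hn0
  · simp only [pow_zero] at hn
    haveI : Subsingleton R := subsingleton_of_zero_eq_one hn.symm
    exact ⟨0, Subsingleton.elim _ _, Subsingleton.elim _ _, ⟨1, Subsingleton.elim _ _⟩⟩
  refine ⟨1 - (1 - a ^ n) ^ n, isIdempotentElem_one_sub_one_sub_pow_pow a n hn, ?_, ?_⟩
  · exact (Commute.one_right a).sub_right
      (((Commute.one_right a).sub_right ((Commute.refl a).pow_right n)).pow_right n)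
  · set P : Polynomial ℤ := 1 - (1 - Polynomial.X ^ n) ^ n with hP
    have H₁ : (Polynomial.X : Polynomial ℤ) ∣ P := by
      have h1 : ((Polynomial.X : Polynomial ℤ)) ^ n ∣ P := by
        have := sub_dvd_pow_sub_pow 1 ((1 : Polynomial ℤ) - Polynomial.X ^ n) n
        rwa [sub_sub_cancel, one_pow] at this
      exact dvd_trans (dvd_pow_self _ hn0.ne') h1
    have H₂ : ((1 : Polynomial ℤ) - Polynomial.X) ∣ 1 - P := by
      have h2 : ((1 : Polynomial ℤ) - Polynomial.X) ^ n ∣ 1 - P := by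
        simp only [hP, sub_sub_cancel]
        simpa using pow_dvd_pow_of_dvd
          (sub_dvd_pow_sub_pow (R := Polynomial ℤ) 1 Polynomial.X n) n
      exact dvd_trans (dvd_pow_self _ hn0.ne') h2
    have hdvd : (Polynomial.X - Polynomial.X ^ 2 : Polynomial ℤ) ∣ Polynomial.X - P := by
      have keyeq : (Polynomial.X : Polynomial ℤ) - P
          = Polynomial.X * (1 - P) - (1 - Polynomial.X) * P := by ring
      have hfac : (Polynomial.X - Polynomial.X ^ 2 : Polynomial ℤ)
          = Polynomial.X * (1 - Polynomial.X) := by ring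
      rw [keyeq, hfac]
      exact dvd_sub (mul_dvd_mul_left _ H₂)
        (by rw [mul_comm]; exact mul_dvd_mul_left _ H₁)
    obtain ⟨Q, hQ⟩ := hdvd
    have heq : a - (1 - (1 - a ^ n) ^ n) = (a - a ^ 2) * Polynomial.aeval a Q := by
      have := congrArg (Polynomial.aeval a) hQ
      simpa [hP] using this
    rw [heq]
    have hcomm : Commute a (Polynomial.aeval a Q) := by
      have := (Commute.all Polynomial.X Q).map (Polynomial.aeval a)
      simpa using this
    exact (hcomm.sub_left (hcomm.pow_left 2)).isNilpotent_mul_right ⟨n, hn⟩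

theorem stmt17 {R S : Type*} [Ring R] [Ring S] (f : R →+* S) (hf : Function.Surjective f)
    (hker : ∀ e : R, IsIdempotentElem e → f e = 0 → e = 0) :
    IsGSWNC R ↔ (IsGSWNC S ∧ ∀ x : R, f x = 0 → IsNilpotent x) := by
  constructor
  · intro hR
    constructor
    · -- S is GSWNC
      intro b hb
      obtain ⟨a, rfl⟩ := hf b
      have ha : ¬ IsUnit a := fun h => hb (h.map f)
      obtain ⟨q, e, hq, he, hc, hcase⟩ := hR a ha
      refine ⟨f q, f e, hq.map f, ?_, hc.map f, ?_⟩
      · show f e * f e = f e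
        rw [← map_mul, he.eq]
      · rcases hcase with h | h <;> [left; right] <;> rw [h] <;> simp
    · -- kernel is nil
      intro x hx
      by_cases hu : IsUnit x
      · have h0 : IsUnit (0 : S) := hx ▸ hu.map f
        have h01 : (0 : S) = 1 := isUnit_zero_iff.mp h0
        have h1 : (1 : R) = 0 := hker 1 IsIdempotentElem.one (by rw [map_one, ← h01])
        exact ⟨1, by rw [pow_one, ← mul_one x, h1, mul_zero]⟩
      · obtain ⟨q, e, hq, he, hc, hcase⟩ := hR x hu
        rcases hcase with h | h
        · have hfe : f e = - f q := by
            have h2 : f q + f e = 0 := by rw [← map_add, ← h, hx]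
            exact eq_neg_of_add_eq_zero_left (by rw [add_comm]; exact h2)
          have hfen : IsNilpotent (f e) := hfe ▸ (hq.map f).neg
          have he0 : e = 0 := hker e he (idem_nilp_zero (by show f e * f e = f e; rw [← map_mul, he.eq]) hfen)
          rw [h, he0, add_zero]; exact hq
        · have hfe : f e = f q := by
            have h2 : f q - f e = 0 := by rw [← map_sub, ← h, hx]
            exact (sub_eq_zero.mp h2).symm
          have hfen : IsNilpotent (f e) := hfe ▸ hq.map f
          have he0 : e = 0 := hker e he (idem_nilp_zero (by show f e * f e = f e; rw [← map_mul, he.eq]) hfen)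
          rw [h, he0, sub_zero]; exact hq
  · rintro ⟨hS, hnil⟩ a ha
    -- first: elements mapping to nilpotents are nilpotent
    have nilp_of_map : ∀ x : R, IsNilpotent (f x) → IsNilpotent x := by
      intro x hx
      obtain ⟨m, hm⟩ := hx
      obtain ⟨k, hk⟩ := hnil (x ^ m) (by rw [map_pow, hm])
      exact ⟨m * k, by rw [pow_mul, hk]⟩
    -- f a is not a unit
    have hfa : ¬ IsUnit (f a) := by
      intro hu
      obtain ⟨b, hb⟩ := hf (↑hu.unit⁻¹ : S)
      have hab : IsUnit (a * b) := by
        have h1 : f (a * b - 1) = 0 := by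
          rw [map_sub, map_mul, map_one, hb]
          simp
        have h2 : IsNilpotent (a * b - 1) := hnil _ h1
        have := h2.isUnit_one_add
        simpa using this
      have hba : IsUnit (b * a) := by
        have h1 : f (b * a - 1) = 0 := by
          rw [map_sub, map_mul, map_one, hb]
          simp
        have h2 : IsNilpotent (b * a - 1) := hnil _ h1
        have := h2.isUnit_one_add
        simpa using this
      obtain ⟨c, hc1, hc2⟩ := isUnit_iff_exists.mp hab
      obtain ⟨d, hd1, hd2⟩ := isUnit_iff_exists.mp hba
      have hleft : (d * b) * a = 1 := by rw [mul_assoc]; exact hd2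
      have hright : a * (b * c) = 1 := by rw [← mul_assoc]; exact hc1
      have heq : d * b = b * c := by
        calc d * b = (d * b) * (a * (b * c)) := by rw [hright, mul_one]
          _ = ((d * b) * a) * (b * c) := by noncomm_ring
          _ = b * c := by rw [hleft, one_mul]
      exact ha ⟨⟨a, b * c, hright, heq ▸ hleft⟩, rfl⟩
    obtain ⟨q, e, hq, he, hc, hcase⟩ := hS (f a) hfa
    rcases hcase with h | h
    ·
      have hfn : IsNilpotent (f (a - a ^ 2)) := by
        have hexp : f (a - a ^ 2) = -(q * (q + e + e - 1)) := by
          rw [map_sub, map_pow, h, sq]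
          calc q + e - (q + e) * (q + e)
              = q + e - (q * q + q * e + (e * q + e * e)) := by noncomm_ring
            _ = q + e - (q * q + q * e + (q * e + e)) := by rw [← hc.eq, he.eq]
            _ = -(q * (q + e + e - 1)) := by noncomm_ring
        rw [hexp]
        have hcq : Commute q (q + e + e - 1) :=
          (((Commute.refl q).add_right hc).add_right hc).sub_right (Commute.one_right q)
        exact (hcq.isNilpotent_mul_right hq).neg
      have hn2 : IsNilpotent (a - a ^ 2) := nilp_of_map _ hfn
      obtain ⟨e', he', hc', hn'⟩ := key_lift a hn2
      exact ⟨a - e', e', hn', he', hc'.sub_left (Commute.refl e'), Or.inl (by abel)⟩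
    · -- f a = q - e
      have hfn : IsNilpotent (f (-a - (-a) ^ 2)) := by
        have hexp : f (-a - (-a) ^ 2) = -(q * (q - e - e + 1)) := by
          rw [map_sub, map_pow, map_neg, h, sq]
          calc -(q - e) - -(q - e) * -(q - e)
              = -(q - e) - (q * q - q * e - (e * q - e * e)) := by noncomm_ring
            _ = -(q - e) - (q * q - q * e - (q * e - e)) := by rw [← hc.eq, he.eq]
            _ = -(q * (q - e - e + 1)) := by noncomm_ring
        rw [hexp]
        have hcq : Commute q (q - e - e + 1) :=
          ((((Commute.refl q).sub_right hc).sub_right hc).add_right (Commute.one_right q))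
        exact (hcq.isNilpotent_mul_right hq).neg
      have hn2 : IsNilpotent (-a - (-a) ^ 2) := nilp_of_map _ hfn
      obtain ⟨e', he', hc', hn'⟩ := key_lift (-a) hn2
      have hq' : IsNilpotent (a + e') := by
        have h2 := hn'.neg
        rwa [show -(-a - e') = a + e' from by abel] at h2
      have hce : Commute a e' := by simpa using hc'.neg_left
      exact ⟨a + e', e', hq', he', hce.add_left (Commute.refl e'), Or.inr (by abel)⟩
end

section
/- The trivial extension T(R, M) of a ring R by an (R,R)-bimodule M is GSWNC if and only if R is GSWNC. -/
open TrivSqZeroExt MulOpposite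

private lemma ringkey {A : Type*} [Ring A] {l r n : A} (hl : IsIdempotentElem l)
    (hr : IsIdempotentElem r) (hn : IsNilpotent n) (hlr : Commute l r) (hln : Commute l n)
    (hrn : Commute r n) :
    ∃ K : A, (l + r) * K = K ∧ (n + l - r) * K = l - r := by
  obtain ⟨u, hu⟩ := hn.isUnit_one_add
  obtain ⟨v, hv⟩ := hn.isUnit_one_sub
  have hrl : r * l = l * r := hlr.eq.symm
  have h0 : l * (l * r) = l * r := by rw [← mul_assoc, hl]
  have h1 : r * (l * r) = l * r := by rw [← mul_assoc, hrl, mul_assoc, hr]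
  have hlu : Commute l ↑u⁻¹ :=
    Commute.units_inv_right (by rw [hu]; exact (Commute.one_right l).add_right hln)
  have hru : Commute r ↑u⁻¹ :=
    Commute.units_inv_right (by rw [hu]; exact (Commute.one_right r).add_right hrn)
  have hnu : Commute n ↑u⁻¹ :=
    Commute.units_inv_right (by rw [hu]; exact (Commute.one_right n).add_right (Commute.refl n))
  have hlv : Commute l ↑v⁻¹ :=
    Commute.units_inv_right (by rw [hv]; exact (Commute.one_right l).sub_right hln)
  have hrv : Commute r ↑v⁻¹ :=
    Commute.units_inv_right (by rw [hv]; exact (Commute.one_right r).sub_right hrn)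
  have hnv : Commute n ↑v⁻¹ :=
    Commute.units_inv_right (by rw [hv]; exact (Commute.one_right n).sub_right (Commute.refl n))
  have h2 : (l + r) * (l - l * r) = l - l * r := by
    rw [add_mul, mul_sub, mul_sub, hl, h0, hrl, h1]; abel
  have h3 : (l + r) * (r - l * r) = r - l * r := by
    rw [add_mul, mul_sub, mul_sub, h0, hr, h1]; abel
  have h4 : (l - r) * (l - l * r) = l - l * r := by
    rw [sub_mul, mul_sub, mul_sub, hl, h0, hrl, h1]; abel
  have h5 : (l - r) * (r - l * r) = -(r - l * r) := by
    rw [sub_mul, mul_sub, mul_sub, h0, hr, h1]; abel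
  have hsplit : (n + l - r) = n + (l - r) := by abel
  refine ⟨↑u⁻¹ * (l - l * r) + ↑v⁻¹ * (r - l * r), ?_, ?_⟩
  · have cu : Commute (l + r) ↑u⁻¹ := hlu.add_left hru
    have cv : Commute (l + r) ↑v⁻¹ := hlv.add_left hrv
    rw [mul_add, ← mul_assoc, ← mul_assoc, cu.eq, cv.eq, mul_assoc, mul_assoc, h2, h3]
  · have cu : Commute (n + l - r) ↑u⁻¹ := (hnu.add_left hlu).sub_left hru
    have cv : Commute (n + l - r) ↑v⁻¹ := (hnv.add_left hlv).sub_left hrv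
    have e1 : (n + l - r) * (l - l * r) = ↑u * (l - l * r) := by
      rw [hsplit, add_mul, h4, hu, add_mul, one_mul, add_comm]
    have e2 : (n + l - r) * (r - l * r) = -(↑v * (r - l * r)) := by
      rw [hsplit, add_mul, h5, hv, sub_mul, one_mul]; abel
    rw [mul_add, ← mul_assoc, ← mul_assoc, cu.eq, cv.eq, mul_assoc, mul_assoc, e1, e2,
      mul_neg, ← mul_assoc, ← mul_assoc, u.inv_mul, v.inv_mul, one_mul, one_mul]
    abel

private def fstRingHom (R M : Type*) [Ring R] [AddCommGroup M] [Module R M] [Module Rᵐᵒᵖ M] :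
    TrivSqZeroExt R M →+* R where
  toFun := fst
  map_one' := fst_one (R := R) (M := M)
  map_mul' := fst_mul
  map_zero' := fst_zero (R := R) (M := M)
  map_add' := fst_add (R := R) (M := M)

private lemma aux_nilp {R M : Type*} [Ring R] [AddCommGroup M] [Module R M] [Module Rᵐᵒᵖ M]
    [SMulCommClass R Rᵐᵒᵖ M] {x : TrivSqZeroExt R M} (h : IsNilpotent (fst x)) : IsNilpotent x := by
  obtain ⟨n, hn⟩ := h
  refine ⟨n + n, ?_⟩
  rw [pow_add]
  have h1 : fst (x ^ n) = 0 := by rw [fst_pow, hn]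
  ext
  · rw [fst_mul, h1, zero_mul, fst_zero]
  · rw [snd_mul, h1, zero_smul, op_zero, zero_smul, add_zero, snd_zero]

theorem stmt18 {R M : Type*} [Ring R] [AddCommGroup M] [Module R M] [Module Rᵐᵒᵖ M]
    [SMulCommClass R Rᵐᵒᵖ M] :
    IsGSWNC (TrivSqZeroExt R M) ↔ IsGSWNC R := by
  constructor
  · intro hT a ha
    have hx : ¬ IsUnit (inl a : TrivSqZeroExt R M) := by rwa [isUnit_inl_iff]
    obtain ⟨Q, E, hQ, hE, hc, hcase⟩ := hT _ hx
    refine ⟨fst Q, fst E, hQ.map (fstRingHom R M), ?_, ?_, ?_⟩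
    · show fst E * fst E = fst E
      rw [← fst_mul, hE]
    · show fst Q * fst E = fst E * fst Q
      rw [← fst_mul, ← fst_mul, hc.eq]
    · rcases hcase with h | h
      · left
        have h2 := congrArg fst h
        rwa [fst_inl, fst_add] at h2
      · right
        have h2 := congrArg fst h
        rwa [fst_inl, fst_sub] at h2
  · intro hR x hx
    have ha : ¬ IsUnit (fst x) := fun h => hx (isUnit_iff_isUnit_fst.mpr h)
    obtain ⟨q, e, hq, he, hc, hcase⟩ := hR _ ha
    set φ := Module.toAddMonoidEnd R M with hφ
    set ψ := Module.toAddMonoidEnd Rᵐᵒᵖ M with hψ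
    have hcross : ∀ (r : R) (s : Rᵐᵒᵖ), Commute (φ r) (ψ s) := by
      intro r s
      refine AddMonoidHom.ext fun y => ?_
      show r • s • y = s • r • y
      exact smul_comm r s y
    have hle : IsIdempotentElem (φ e) := by
      show φ e * φ e = φ e
      rw [← map_mul, he]
    have hre : IsIdempotentElem (ψ (op e)) := by
      show ψ (op e) * ψ (op e) = ψ (op e)
      rw [← map_mul, ← op_mul, he]
    have hqe_l : Commute (φ q) (φ e) := by
      show φ q * φ e = φ e * φ q
      rw [← map_mul, ← map_mul, hc.eq]
    have hqe_r : Commute (ψ (op q)) (ψ (op e)) := by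
      show ψ (op q) * ψ (op e) = ψ (op e) * ψ (op q)
      rw [← map_mul, ← map_mul, ← op_mul, ← op_mul, hc.eq]
    have hNnil : IsNilpotent (φ q - ψ (op q)) :=
      (hcross q (op q)).isNilpotent_sub (hq.map φ)
        ((by obtain ⟨n, hn⟩ := hq; exact ⟨n, by rw [← op_pow, hn, op_zero]⟩ :
          IsNilpotent (op q)).map ψ)
    have hln : Commute (φ e) (φ q - ψ (op q)) := (hqe_l.symm).sub_right (hcross e (op q))
    have hrn : Commute (ψ (op e)) (φ q - ψ (op q)) :=
      ((hcross q (op e)).symm).sub_right hqe_r.symm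
    rcases hcase with hcase | hcase
    · obtain ⟨K, hK1, hK2⟩ := ringkey hle hre hNnil (hcross e (op e)) hln hrn
      set k := K (snd x) with hk
      have hk1 : e • k + op e • k = k := DFunLike.congr_fun hK1 (snd x)
      have hk2 : q • k - op q • k + e • k - op e • k = e • snd x - op e • snd x :=
        DFunLike.congr_fun hK2 (snd x)
      set E : TrivSqZeroExt R M := inl e + inr k with hE
      have hEf : fst E = e := by rw [hE, fst_add, fst_inl, fst_inr, add_zero]
      have hEs : snd E = k := by rw [hE, snd_add, snd_inl, snd_inr, zero_add]
      have hQf : fst (x - E) = q := by rw [fst_sub, hEf, hcase]; abel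
      refine ⟨x - E, E, aux_nilp (hQf ▸ hq), ?_, ?_, Or.inl (by abel)⟩
      · show E * E = E
        ext
        · rw [fst_mul, hEf, he]
        · rw [snd_mul, hEf, hEs, hk1]
      · show (x - E) * E = E * (x - E)
        ext
        · rw [fst_mul, fst_mul, hQf, hEf]
          exact hc
        · rw [snd_mul, snd_mul, hQf, hEf, hEs, snd_sub, hEs, smul_sub, smul_sub]
          have h9 : q • k + (op e • snd x - op e • k) - ((e • snd x - e • k) + op q • k)
              = q • k - op q • k + e • k - op e • k - (e • snd x - op e • snd x) := by abel
          rw [hk2, sub_self] at h9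
          exact sub_eq_zero.mp h9
    · obtain ⟨K, hK1, hK2⟩ := ringkey hre hle hNnil (hcross e (op e)).symm hrn hln
      have hK1' : (φ e + ψ (op e)) * (-K) = -K := by rw [mul_neg, add_comm, hK1]
      have hK2' : (φ q - ψ (op q) - φ e + ψ (op e)) * (-K) = φ e - ψ (op e) := by
        have hre2 : φ q - ψ (op q) - φ e + ψ (op e) = φ q - ψ (op q) + ψ (op e) - φ e := by abel
        rw [hre2, mul_neg, hK2, neg_sub]
      set k := (-K) (snd x) with hk
      have hk1 : e • k + op e • k = k := DFunLike.congr_fun hK1' (snd x)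
      have hk2 : q • k - op q • k - e • k + op e • k = e • snd x - op e • snd x :=
        DFunLike.congr_fun hK2' (snd x)
      set E : TrivSqZeroExt R M := inl e + inr k with hE
      have hEf : fst E = e := by rw [hE, fst_add, fst_inl, fst_inr, add_zero]
      have hEs : snd E = k := by rw [hE, snd_add, snd_inl, snd_inr, zero_add]
      have hQf : fst (x + E) = q := by rw [fst_add, hEf, hcase]; abel
      refine ⟨x + E, E, aux_nilp (hQf ▸ hq), ?_, ?_, Or.inr (by abel)⟩
      · show E * E = E
        ext
        · rw [fst_mul, hEf, he]
        · rw [snd_mul, hEf, hEs, hk1]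
      · show (x + E) * E = E * (x + E)
        ext
        · rw [fst_mul, fst_mul, hQf, hEf]
          exact hc
        · rw [snd_mul, snd_mul, hQf, hEf, hEs, snd_add, hEs, smul_add, smul_add]
          have h9 : q • k + (op e • snd x + op e • k) - ((e • snd x + e • k) + op q • k)
              = q • k - op q • k - e • k + op e • k - (e • snd x - op e • snd x) := by abel
          rw [hk2, sub_self] at h9
          exact sub_eq_zero.mp h9
end

section
/- If R is a GSWNC ring, then for every n > 2 there does not exist a nonzero idempotent e ∈ R such that eRe is isomorphic to the matrix ring Mₙ(S) for some nonzero ring S. -/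
lemma mem_cornerRing_iff {R : Type*} [Ring R] {e : R} {he : IsIdempotentElem e} {x : R} :
    x ∈ cornerRing e he ↔ e * x * e = x := Iff.rfl

/-- An idempotent nilpotent element in a nontrivial ring is zero. -/
lemma aux_idem_nilp_eq_zero {R : Type*} [Ring R] [Nontrivial R] {w : R}
    (hw : IsIdempotentElem w) (hn : IsNilpotent w) : w = 0 := by
  obtain ⟨k, hk⟩ := hn
  rcases Nat.eq_zero_or_pos k with h | h
  · subst h
    rw [pow_zero] at hk
    exact absurd hk one_ne_zero
  · obtain ⟨j, rfl⟩ := Nat.exists_eq_succ_of_ne_zero h.ne'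
    rw [hw.pow_succ_eq] at hk
    exact hk

theorem stmt19 {R : Type*} [Ring R] (hR : IsGSWNC R) (n : ℕ) (hn : 2 < n) :
    ¬ ∃ (e : R) (he : IsIdempotentElem e), e ≠ 0 ∧
      ∃ (S : Type) (_ : Ring S) (_ : Nontrivial S),
        Nonempty (cornerRing e he ≃+* Matrix (Fin n) (Fin n) S) := by
  rintro ⟨e, he, he0, S, _, _, ⟨f⟩⟩
  haveI : Nontrivial R := nontrivial_of_ne e 0 he0
  -- three distinguished indices
  set i0 : Fin n := ⟨0, by omega⟩ with hi0
  set i1 : Fin n := ⟨1, by omega⟩ with hi1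
  set i2 : Fin n := ⟨2, by omega⟩ with hi2
  have h01 : i0 ≠ i1 := by simp [hi0, hi1, Fin.ext_iff]
  have h02 : i0 ≠ i2 := by simp [hi0, hi2, Fin.ext_iff]
  have h12 : i1 ≠ i2 := by simp [hi1, hi2, Fin.ext_iff]
  set E : Fin n → Fin n → Matrix (Fin n) (Fin n) S := fun a b => Matrix.single a b 1 with hE
  -- the key matrices
  set A : Matrix (Fin n) (Fin n) S := E i0 i1 + E i1 i0 + E i1 i1 with hA
  set P : Matrix (Fin n) (Fin n) S := E i0 i0 + E i1 i1 with hP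
  set M : Matrix (Fin n) (Fin n) S :=
    (E i0 i1 + E i0 i1) + (E i1 i0 + E i1 i0) - (E i0 i0 + E i0 i0 + E i0 i0) - E i1 i1 with hM
  set Z : Matrix (Fin n) (Fin n) S := E i2 i2 with hZ
  have hA2m : A * A - A = P := by
    simp only [hA, hP, hE, mul_add, add_mul, Matrix.single_mul_single_same,
      Matrix.single_mul_single_of_ne, h01, h01.symm, one_mul, Ne, not_false_iff,
      zero_mul, mul_zero, add_zero, zero_add]
    abel
  have hPP : P * P = P := by
    simp only [hP, hE, mul_add, add_mul, Matrix.single_mul_single_same,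
      Matrix.single_mul_single_of_ne, h01, h01.symm, one_mul, Ne, not_false_iff,
      zero_mul, mul_zero, add_zero, zero_add]
    try abel
  have hPne : P ≠ 0 := by
    intro h
    have h2 := congrFun (congrFun h i0) i0
    simp only [hP, hE, Matrix.add_apply, Matrix.single_apply_same,
      Matrix.zero_apply] at h2
    rw [Matrix.single_apply_of_ne _ _ _ _ _ (by exact fun hh => h01 hh.1.symm)] at h2
    simpa using h2
  have hBpM : (A * A + A) * M = P := by
    simp only [hA, hP, hM, hE, mul_add, add_mul, mul_sub, sub_mul, mul_neg, neg_mul,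
      Matrix.single_mul_single_same, Matrix.single_mul_single_of_ne, h01, h01.symm,
      one_mul, Ne, not_false_iff, zero_mul, mul_zero, add_zero, zero_add, sub_zero, zero_sub]
    abel
  have hMBp : M * (A * A + A) = P := by
    simp only [hA, hP, hM, hE, mul_add, add_mul, mul_sub, sub_mul, mul_neg, neg_mul,
      Matrix.single_mul_single_same, Matrix.single_mul_single_of_ne, h01, h01.symm,
      one_mul, Ne, not_false_iff, zero_mul, mul_zero, add_zero, zero_add, sub_zero, zero_sub]
    abel
  have hAZ : A * Z = 0 := by
    simp only [hA, hZ, hE, add_mul, Matrix.single_mul_single_of_ne, h12, h02,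
      Ne, not_false_iff, add_zero]
  have hZne : Z ≠ 0 := by
    intro h
    have h2 := congrFun (congrFun h i2) i2
    simp only [hZ, hE, Matrix.single_apply_same, Matrix.zero_apply] at h2
    exact one_ne_zero h2
  clear_value A P M Z
  clear hA hP hM hZ hE h01 h02 h12 hi0 hi1 hi2
  clear_value i0 i1 i2
  -- the element of R
  set α : cornerRing e he := f.symm A with hα
  set a : R := (α : R) with ha
  have hamem : e * a * e = a := by exact α.2
  have hae : a * e = a := by
    conv_lhs => rw [← hamem]
    rw [mul_assoc (e * a) e e, he.eq]
    exact hamem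
  have hfa : f α = A := f.apply_symm_apply A
  -- a is not a unit
  have hnu : ¬ IsUnit a := by
    rintro ⟨u, hu⟩
    have he1 : e = 1 := by
      have h0 : a * (1 - e) = 0 := by rw [mul_sub, mul_one, hae, sub_self]
      have hsub : (1 : R) - e = 0 := by
        calc (1 : R) - e = (↑u⁻¹ * a) * (1 - e) := by rw [← hu, u.inv_mul, one_mul]
          _ = ↑u⁻¹ * (a * (1 - e)) := by rw [mul_assoc]
          _ = 0 := by rw [h0, mul_zero]
      exact (sub_eq_zero.mp hsub).symm
    subst he1
    have hbmem : (↑u⁻¹ : R) ∈ cornerRing (1 : R) he :=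
      mem_cornerRing_iff.mpr (by rw [one_mul, mul_one])
    have h1mem : (1 : R) ∈ cornerRing (1 : R) he :=
      mem_cornerRing_iff.mpr (by rw [one_mul, mul_one])
    set β := f ⟨↑u⁻¹, hbmem⟩ with hβ
    set J := f ⟨1, h1mem⟩ with hJ
    have hJid : ∀ Y : Matrix (Fin n) (Fin n) S, J * Y = Y := by
      intro Y
      rw [← f.apply_symm_apply Y, hJ, ← map_mul]
      congr 1
      apply Subtype.ext
      show (1 : R) * ↑(f.symm Y) = ↑(f.symm Y)
      rw [one_mul]
    have hβA : β * A = J := by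
      rw [hβ, hJ, ← hfa, ← map_mul]
      congr 1
      apply Subtype.ext
      show (↑u⁻¹ : R) * a = 1
      rw [← hu, u.inv_mul]
    have hZ0 : Z = 0 := by
      calc Z = J * Z := (hJid _).symm
        _ = β * A * Z := by rw [hβA]
        _ = β * (A * Z) := by rw [mul_assoc]
        _ = 0 := by rw [hAZ, mul_zero]
    exact hZne hZ0
  obtain ⟨q, g, hq, hg, hqg, hcase⟩ := hR a hnu
  rcases hcase with h | h
  · -- a = q + g : then a*a - a is nilpotent
    have hqa : Commute q a := by rw [h]; exact (Commute.refl q).add_right hqg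
    have key : a * a - a = q * (a + g - 1) := by
      have e1 : a * a - a = q * q + (q * g + g * q) + g * g - q - g := by
        rw [h]; noncomm_ring
      have e2 : q * (a + g - 1) = q * q + (q * g + q * g) - q := by
        rw [h]; noncomm_ring
      rw [e1, e2, hg.eq, ← hqg.eq]
      abel
    have hnilw : IsNilpotent (a * a - a) := by
      rw [key]
      exact ((hqa.add_right hqg).sub_right (Commute.one_right q)).isNilpotent_mul_right hq
    -- a*a - a corresponds to the idempotent P
    set γ : cornerRing e he := α * α - α with hγ
    have hγcoe : (γ : R) = a * a - a := rfl
    have hfγ : f γ = P := by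
      rw [hγ, map_sub, map_mul, hfa, hA2m]
    have hγidem : γ * γ = γ := f.injective (by rw [map_mul, hfγ, hPP])
    have hwidem : IsIdempotentElem (a * a - a) := by
      show (a * a - a) * (a * a - a) = a * a - a
      rw [← hγcoe]
      exact_mod_cast congrArg (Subtype.val) hγidem
    have hw0 : a * a - a = 0 := aux_idem_nilp_eq_zero hwidem hnilw
    have hγ0 : γ = 0 := Subtype.ext (by rw [hγcoe, hw0]; rfl)
    exact hPne (by rw [← hfγ, hγ0, map_zero])
  · -- a = q - g : then a*a + a is nilpotent
    have hqa : Commute q a := by rw [h]; exact (Commute.refl q).sub_right hqg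
    have key : a * a + a = q * (a - g + 1) := by
      have e1 : a * a + a = q * q - (q * g + g * q) + g * g + q - g := by
        rw [h]; noncomm_ring
      have e2 : q * (a - g + 1) = q * q - (q * g + q * g) + q := by
        rw [h]; noncomm_ring
      rw [e1, e2, hg.eq, ← hqg.eq]
      abel
    have hnilw : IsNilpotent (a * a + a) := by
      rw [key]
      exact ((hqa.sub_right hqg).add_right (Commute.one_right q)).isNilpotent_mul_right hq
    set γ : cornerRing e he := α * α + α with hγ
    have hγcoe : (γ : R) = a * a + a := rfl
    have hfγ : f γ = A * A + A := by rw [hγ, map_add, map_mul, hfa]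
    set μ : cornerRing e he := f.symm M with hμ
    have hfμ : f μ = M := f.apply_symm_apply M
    set m : R := (μ : R) with hm
    have hcomm : γ * μ = μ * γ := f.injective (by rw [map_mul, map_mul, hfγ, hfμ, hBpM, hMBp])
    have hfγμ : f (γ * μ) = P := by rw [map_mul, hfγ, hfμ, hBpM]
    have hidem : (γ * μ) * (γ * μ) = γ * μ := f.injective
      (by rw [map_mul, hfγμ, hPP])
    have hcommR : Commute (a * a + a) m := by
      show (a * a + a) * m = m * (a * a + a)
      rw [← hγcoe]
      exact congrArg (Subtype.val) hcomm
    have hpcoe : ((γ * μ : cornerRing e he) : R) = (a * a + a) * m := rfl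
    have hpidem : IsIdempotentElem ((a * a + a) * m) := by
      show ((a * a + a) * m) * ((a * a + a) * m) = (a * a + a) * m
      rw [← hpcoe]
      exact_mod_cast congrArg (Subtype.val) hidem
    have hpnil : IsNilpotent ((a * a + a) * m) := hcommR.isNilpotent_mul_right hnilw
    have hp0 : (a * a + a) * m = 0 := aux_idem_nilp_eq_zero hpidem hpnil
    have hγμ0 : γ * μ = 0 := Subtype.ext (by rw [hpcoe, hp0]; rfl)
    exact hPne (by rw [← hfγμ, hγμ0, map_zero])
end
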